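/- arXiv:1209.0809 — 5 statements merged into one kernel-verified Lean document; each statement's English description precedes it below -/
import Mathlib

section
/- Let (x_n) be a bounded sequence in ℓ²(ℤ, ℝᵈ) and x ∈ ℓ²(ℤ, ℝᵈ). Then ‖x_n − x‖_∞ → 0 (convergence in the supremum norm) if and only if (x_n) converges weakly to x in ℓ² and (x_n) vanishes uniformly at infinity. -/
open Filter Topology

noncomputable section

/-- The Hilbert space `ℓ²(ℤ, ℝᵈ)` of square-summable doubly infinite sequences. -/
abbrev L2 (d : ℕ) := lp (fun _ : ℤ => EuclideanSpace ℝ (Fin d)) 2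

/-- Weak convergence in the Hilbert space `ℓ²(ℤ, ℝᵈ)`. -/
def WeakTendsto {d : ℕ} (x : ℕ → L2 d) (y : L2 d) : Prop :=
  ∀ z : L2 d, Tendsto (fun n => (inner ℝ (x n) z : ℝ)) atTop (nhds (inner ℝ y z))

/-- A sequence `(x_n)` in `ℓ²(ℤ, ℝᵈ)` vanishes uniformly at infinity if for every `ε > 0`
there are `n₀, m₀` such that `|x_n(m)| ≤ ε` whenever `n ≥ n₀` and `|m| ≥ m₀`. -/
def VanishesUniformlyAtInfinity {d : ℕ} (x : ℕ → L2 d) : Prop :=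
  ∀ ε > (0 : ℝ), ∃ n₀ m₀ : ℕ, ∀ n ≥ n₀, ∀ m : ℤ, (m₀ : ℤ) ≤ |m| → ‖x n m‖ ≤ ε

/-- An individual element of `ℓ²` has small tails. -/
lemma L2.tail_small {d : ℕ} (f : L2 d) {ε : ℝ} (hε : 0 < ε) :
    ∃ m₀ : ℕ, ∀ m : ℤ, (m₀ : ℤ) ≤ |m| → ‖f m‖ ≤ ε := by
  classical
  have hsum : Summable fun m : ℤ => ‖f m‖ ^ ((2 : ENNReal).toReal) :=
    (lp.memℓp f).summable (by norm_num)
  have htends := hsum.tendsto_cofinite_zero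
  have hev : ∀ᶠ m in Filter.cofinite, ‖f m‖ ≤ ε := by
    have h2 : (0 : ℝ) < ε ^ ((2 : ENNReal).toReal) := by positivity
    filter_upwards [htends.eventually_lt_const h2] with m hm
    by_contra h
    push_neg at h
    have := Real.rpow_le_rpow hε.le h.le (by norm_num : (0 : ℝ) ≤ (2 : ENNReal).toReal)
    linarith
  have hfin : {m : ℤ | ¬ ‖f m‖ ≤ ε}.Finite := hev
  set S := hfin.toFinset with hS
  refine ⟨S.sup (fun m => m.natAbs) + 1, ?_⟩
  intro m hm
  by_contra h
  have hmS : m ∈ S := hfin.mem_toFinset.2 h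
  have h1 : m.natAbs ≤ S.sup (fun m => m.natAbs) := Finset.le_sup hmS
  rw [Int.abs_eq_natAbs] at hm
  omega

/-- Weak convergence implies pointwise convergence. -/
lemma WeakTendsto.pointwise {d : ℕ} {x : ℕ → L2 d} {x₀ : L2 d}
    (hw : WeakTendsto x x₀) (m : ℤ) :
    Tendsto (fun n => x n m) atTop (𝓝 (x₀ m)) := by
  classical
  have hcoord : ∀ j : Fin d, Tendsto (fun n => x n m j) atTop (𝓝 (x₀ m j)) := by
    intro j
    have hz := hw (lp.single 2 m (EuclideanSpace.single j (1 : ℝ)))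
    have hl : ∀ g : L2 d,
        (inner ℝ g (lp.single 2 m (EuclideanSpace.single j (1 : ℝ))) : ℝ) = g m j := by
      intro g
      rw [lp.inner_single_right, EuclideanSpace.inner_single_right]
      simp
    simp only [hl] at hz
    exact hz
  rw [tendsto_iff_norm_sub_tendsto_zero]
  have hsq : Tendsto (fun n => ∑ j : Fin d, (x n m j - x₀ m j) ^ 2) atTop (𝓝 0) := by
    have : Tendsto (fun n => ∑ j : Fin d, (x n m j - x₀ m j) ^ 2) atTop
        (𝓝 (∑ j : Fin d, (0 : ℝ) ^ 2)) := by
      refine tendsto_finset_sum _ (fun j _ => ?_)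
      have hj : Tendsto (fun n => x n m j - x₀ m j) atTop (𝓝 0) := by
        simpa using (hcoord j).sub (tendsto_const_nhds (x := x₀ m j))
      simpa using hj.pow 2
    simpa using this
  have := (Real.continuous_sqrt.tendsto 0).comp hsq
  simp only [Real.sqrt_zero] at this
  refine this.congr (fun n => ?_)
  rw [Function.comp_apply, EuclideanSpace.norm_eq]
  congr 1
  refine Finset.sum_congr rfl (fun j _ => ?_)
  have : (x n m - x₀ m) j = x n m j - x₀ m j := rfl
  rw [this, Real.norm_eq_abs, sq_abs]

/-- For a bounded sequence `(x_n)` in `ℓ²(ℤ, ℝᵈ)` and `x ∈ ℓ²(ℤ, ℝᵈ)`: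
`‖x_n − x‖_∞ → 0` (uniform convergence of the sequences) iff `x_n ⇀ x` weakly in `ℓ²`
and `(x_n)` vanishes uniformly at infinity. -/
theorem sup_norm_convergence_iff_weak_and_vanishing {d : ℕ}
    (x : ℕ → L2 d) (x₀ : L2 d) (hbdd : ∃ C : ℝ, ∀ n, ‖x n‖ ≤ C) :
    (∀ ε > (0 : ℝ), ∃ n₀ : ℕ, ∀ n ≥ n₀, ∀ m : ℤ, ‖x n m - x₀ m‖ ≤ ε) ↔
      (WeakTendsto x x₀ ∧ VanishesUniformlyAtInfinity x) := by
  classical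
  obtain ⟨C, hC⟩ := hbdd
  have hsubapp : ∀ n m, (x n - x₀ : L2 d) m = x n m - x₀ m := by
    intro n m; rw [lp.coeFn_sub]; rfl
  constructor
  · intro h
    constructor
    · -- weak convergence
      intro z
      rw [Metric.tendsto_atTop]
      intro ε hε
      set C' : ℝ := C + ‖x₀‖ + 1 with hC'
      have hC'pos : 0 < C' := by
        have h0 : 0 ≤ C := le_trans (norm_nonneg _) (hC 0)
        have := norm_nonneg x₀
        positivity
      have hyb : ∀ n, ‖x n - x₀‖ ≤ C' := by
        intro n
        calc ‖x n - x₀‖ ≤ ‖x n‖ + ‖x₀‖ := norm_sub_le _ _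
          _ ≤ C' := by have := hC n; simp only [hC']; linarith
      set δ : ℝ := ε / (2 * C') with hδ
      have hδpos : 0 < δ := by positivity
      -- find a finite set approximating z
      have hz : HasSum (fun m : ℤ => lp.single 2 m (z m)) z :=
        lp.hasSum_single ENNReal.ofNat_ne_top z
      obtain ⟨s, hs⟩ : ∃ s : Finset ℤ,
          ‖z - ∑ m ∈ s, lp.single 2 m (z m)‖ < δ := by
        have := Metric.tendsto_nhds.1 hz δ hδpos
        obtain ⟨s, hs⟩ := this.exists
        exact ⟨s, by rwa [dist_eq_norm, ← norm_neg, neg_sub] at hs⟩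
      set Z : ℝ := ∑ m ∈ s, ‖z m‖ with hZ
      have hZ0 : 0 ≤ Z := Finset.sum_nonneg fun _ _ => norm_nonneg _
      set η : ℝ := ε / (4 * (Z + 1)) with hη
      have hηpos : 0 < η := by positivity
      obtain ⟨n₀, hn₀⟩ := h η hηpos
      refine ⟨n₀, fun n hn => ?_⟩
      rw [Real.dist_eq]
      have key : (inner ℝ (x n) z : ℝ) - inner ℝ x₀ z = inner ℝ (x n - x₀ : L2 d) z := by
        rw [inner_sub_left]
      rw [key]
      set y : L2 d := x n - x₀ with hy
      have hsplit : (inner ℝ y z : ℝ) =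
          inner ℝ y (∑ m ∈ s, lp.single 2 m (z m)) +
          inner ℝ y (z - ∑ m ∈ s, lp.single 2 m (z m)) := by
        rw [inner_sub_right]; ring
      rw [hsplit]
      have hterm1 : |(inner ℝ y (∑ m ∈ s, lp.single 2 m (z m)) : ℝ)| ≤ η * Z := by
        rw [inner_sum]
        calc |∑ m ∈ s, (inner ℝ y (lp.single 2 m (z m)) : ℝ)|
            ≤ ∑ m ∈ s, |(inner ℝ y (lp.single 2 m (z m)) : ℝ)| :=
              Finset.abs_sum_le_sum_abs _ _
          _ ≤ ∑ m ∈ s, η * ‖z m‖ := by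
              refine Finset.sum_le_sum fun m _ => ?_
              rw [lp.inner_single_right]
              calc |(inner ℝ (y m) (z m) : ℝ)| ≤ ‖y m‖ * ‖z m‖ := abs_real_inner_le_norm _ _
                _ ≤ η * ‖z m‖ := by
                    refine mul_le_mul_of_nonneg_right ?_ (norm_nonneg _)
                    rw [hy, hsubapp]
                    exact hn₀ n hn m
          _ = η * Z := by rw [hZ, Finset.mul_sum]
      have hterm2 : |(inner ℝ y (z - ∑ m ∈ s, lp.single 2 m (z m)) : ℝ)| ≤ C' * δ := by
        calc |(inner ℝ y (z - ∑ m ∈ s, lp.single 2 m (z m)) : ℝ)|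
            ≤ ‖y‖ * ‖z - ∑ m ∈ s, lp.single 2 m (z m)‖ := abs_real_inner_le_norm _ _
          _ ≤ C' * δ := by
              apply mul_le_mul (hyb n) hs.le (norm_nonneg _) hC'pos.le
      have h1 : η * Z < ε / 2 := by
        rw [hη]
        rw [div_mul_eq_mul_div, div_lt_iff₀ (by positivity)]
        nlinarith
      have h2 : C' * δ = ε / 2 := by
        rw [hδ]; field_simp
      calc |(inner ℝ y (∑ m ∈ s, lp.single 2 m (z m)) : ℝ) +
            inner ℝ y (z - ∑ m ∈ s, lp.single 2 m (z m))|
          ≤ |(inner ℝ y (∑ m ∈ s, lp.single 2 m (z m)) : ℝ)| +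
            |(inner ℝ y (z - ∑ m ∈ s, lp.single 2 m (z m)) : ℝ)| := abs_add_le _ _
        _ ≤ η * Z + C' * δ := add_le_add hterm1 hterm2
        _ = η * Z + ε / 2 := by rw [h2]
        _ < ε / 2 + ε / 2 := by linarith
        _ = ε := by ring
    · -- vanishing uniformly at infinity
      intro ε hε
      obtain ⟨n₀, hn₀⟩ := h (ε / 2) (by linarith)
      obtain ⟨m₀, hm₀⟩ := L2.tail_small x₀ (show (0:ℝ) < ε / 2 by linarith)
      refine ⟨n₀, m₀, fun n hn m hm => ?_⟩
      calc ‖x n m‖ = ‖(x n m - x₀ m) + x₀ m‖ := by rw [sub_add_cancel]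
        _ ≤ ‖x n m - x₀ m‖ + ‖x₀ m‖ := norm_add_le _ _
        _ ≤ ε / 2 + ε / 2 := add_le_add (hn₀ n hn m) (hm₀ m hm)
        _ = ε := by ring
  · rintro ⟨hw, hv⟩
    intro ε hε
    have hpt := hw.pointwise
    obtain ⟨n₁, m₁, h1⟩ := hv (ε / 2) (by linarith)
    obtain ⟨m₂, h2⟩ := L2.tail_small x₀ (show (0:ℝ) < ε / 2 by linarith)
    set M : ℕ := max m₁ m₂ with hM
    have h3 : ∀ m : ℤ, ∃ N : ℕ, ∀ n ≥ N, ‖x n m - x₀ m‖ ≤ ε := by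
      intro m
      obtain ⟨N, hN⟩ := Metric.tendsto_atTop.1 (hpt m) ε hε
      exact ⟨N, fun n hn => by have := hN n hn; rw [dist_eq_norm] at this; exact this.le⟩
    choose N hN using h3
    set s : Finset ℤ := Finset.Icc (-(M : ℤ)) (M : ℤ) with hs
    refine ⟨max n₁ (s.sup N), fun n hn m => ?_⟩
    by_cases hm : (M : ℤ) ≤ |m|
    · have ha : (m₁ : ℤ) ≤ |m| := le_trans (by exact_mod_cast Nat.cast_le.2 (le_max_left m₁ m₂)) hm
      have hb : (m₂ : ℤ) ≤ |m| := le_trans (by exact_mod_cast Nat.cast_le.2 (le_max_right m₁ m₂)) hm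
      calc ‖x n m - x₀ m‖ ≤ ‖x n m‖ + ‖x₀ m‖ := norm_sub_le _ _
        _ ≤ ε / 2 + ε / 2 :=
            add_le_add (h1 n (le_trans (le_max_left _ _) hn) m ha) (h2 m hb)
        _ = ε := by ring
    · push_neg at hm
      have hms : m ∈ s := by
        rw [hs, Finset.mem_Icc]
        rw [abs_lt] at hm
        omega
      have : N m ≤ s.sup N := Finset.le_sup hms
      exact hN m n (le_trans (le_trans this (le_max_right _ _)) hn)
end
end

section
/- Let (x_n) be a bounded sequence in ℓ²(ℤ, ℝᵈ). Then at least one of the following holds: (i) (x_n) vanishes uniformly at infinity; (ii) there exist a sequence (l_k) ⊂ ℤ with |l_k| → ∞ and a subsequence (x_{n_k}) such that the shifted sequence x̃_k(m) := x_{n_k}(m + l_k) converges weakly in ℓ² to some x̃ ≠ 0. -/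
open Filter Topology
open scoped ENNReal

noncomputable section

namespace ShiftAuxLemmas

variable {d : ℕ}

lemma two_toReal : ((2 : ℝ≥0∞).toReal) = (2 : ℝ) := by norm_num

set_option maxHeartbeats 1000000 in
lemma shift_memℓp (f : L2 d) (l : ℤ) : Memℓp (fun i : ℤ => f (i + l)) 2 := by
  have hs : Summable fun i : ℤ => ‖f i‖ ^ ((2:ℝ≥0∞).toReal) :=
    (lp.memℓp f).summable (by rw [two_toReal]; norm_num)
  apply memℓp_gen
  have : (fun i : ℤ => ‖f (i + l)‖ ^ ((2:ℝ≥0∞).toReal))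
      = (fun i : ℤ => ‖f i‖ ^ ((2:ℝ≥0∞).toReal)) ∘ (Equiv.addRight l) := rfl
  rw [this, (Equiv.addRight l).summable_iff]
  exact hs

/-- The shift of an `ℓ²` sequence. -/
def shift (f : L2 d) (l : ℤ) : L2 d := ⟨fun i => f (i + l), shift_memℓp f l⟩

@[simp] lemma shift_apply (f : L2 d) (l : ℤ) (i : ℤ) : shift f l i = f (i + l) := rfl

lemma norm_shift (f : L2 d) (l : ℤ) : ‖shift f l‖ = ‖f‖ := by
  have h2 : (0:ℝ) < (2:ℝ≥0∞).toReal := by rw [two_toReal]; norm_num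
  have hg := lp.norm_rpow_eq_tsum h2 (shift f l)
  have hf := lp.norm_rpow_eq_tsum h2 f
  have heq : ∑' i : ℤ, ‖(shift f l) i‖ ^ ((2:ℝ≥0∞).toReal)
      = ∑' i : ℤ, ‖f i‖ ^ ((2:ℝ≥0∞).toReal) :=
    (Equiv.addRight l).tsum_eq (fun i => ‖f i‖ ^ ((2:ℝ≥0∞).toReal))
  have h : ‖shift f l‖ ^ ((2:ℝ≥0∞).toReal) = ‖f‖ ^ ((2:ℝ≥0∞).toReal) := by
    rw [hg, hf, heq]
  rw [two_toReal, Real.rpow_two, Real.rpow_two] at h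
  have := congrArg Real.sqrt h
  rwa [Real.sqrt_sq (norm_nonneg _), Real.sqrt_sq (norm_nonneg _)] at this

end ShiftAuxLemmas

open ShiftAuxLemmas in
/-- Shifted subsequence lemma: a bounded sequence in `ℓ²(ℤ, ℝᵈ)` either vanishes
uniformly at infinity, or some sequence of shifts (with `|l_k| → ∞`) of a subsequence
converges weakly to a nonzero limit. -/
theorem shifted_subsequence_lemma {d : ℕ} (x : ℕ → L2 d)
    (hbdd : ∃ C : ℝ, ∀ n, ‖x n‖ ≤ C) :
    VanishesUniformlyAtInfinity x ∨
      ∃ (l : ℕ → ℤ) (φ : ℕ → ℕ) (xt : ℕ → L2 d) (xlim : L2 d),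
        Tendsto (fun k => |l k|) atTop atTop ∧ StrictMono φ ∧
        (∀ k m, xt k m = x (φ k) (m + l k)) ∧
        WeakTendsto xt xlim ∧ xlim ≠ 0 := by
  by_cases hvan : VanishesUniformlyAtInfinity x
  · exact Or.inl hvan
  right
  obtain ⟨C₀, hC₀⟩ := hbdd
  set C : ℝ := max C₀ 0 with hCdef
  have hC : ∀ n, ‖x n‖ ≤ C := fun n => (hC₀ n).trans (le_max_left _ _)
  have hC0 : (0:ℝ) ≤ C := le_max_right _ _
  -- negate vanishing
  rw [VanishesUniformlyAtInfinity] at hvan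
  push_neg at hvan
  obtain ⟨ε, hε, hsel⟩ := hvan
  -- choose bad indices
  choose N hN M hM1 hM2 using hsel
  -- build strictly increasing sequence of indices with shifts going to infinity
  let A : ℕ → ℕ := fun k => Nat.rec 0 (fun k ih => N ih k + 1) k
  let n : ℕ → ℕ := fun k => N (A k) k
  let m : ℕ → ℤ := fun k => M (A k) k
  have hA : ∀ k, A (k+1) = n k + 1 := fun k => rfl
  have hnmono : StrictMono n := by
    apply strictMono_nat_of_lt_succ
    intro k
    have h1 : A (k+1) ≤ n (k+1) := hN _ _
    rw [hA k] at h1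
    omega
  have hm1 : ∀ k : ℕ, (k : ℤ) ≤ |m k| := fun k => hM1 _ _
  have hm2 : ∀ k, ε < ‖x (n k) (m k)‖ := fun k => hM2 _ _
  -- the shifted sequence
  set Y : ℕ → L2 d := fun k => shift (x (n k)) (m k) with hYdef
  have hYnorm : ∀ k, ‖Y k‖ ≤ C := fun k => by
    rw [hYdef]; rw [norm_shift]; exact hC _
  -- sequential compactness of product of closed balls
  set E := EuclideanSpace ℝ (Fin d)
  have hcomp : IsCompact (Set.univ.pi fun _ : ℤ => Metric.closedBall (0:E) C) :=
    isCompact_univ_pi fun _ => isCompact_closedBall _ _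
  have hmem : ∀ k, (⇑(Y k) : ℤ → E) ∈ (Set.univ.pi fun _ : ℤ => Metric.closedBall (0:E) C) := by
    intro k i _
    simp only [Metric.mem_closedBall, dist_zero_right]
    exact (lp.norm_apply_le_norm two_ne_zero (Y k) i).trans (hYnorm k)
  obtain ⟨f, hfmem, ψ, hψ, hconv⟩ :=
    (hcomp.isSeqCompact).subseq_of_frequently_in (Frequently.of_forall hmem)
  have hpt : ∀ i : ℤ, Tendsto (fun j => Y (ψ j) i) atTop (𝓝 (f i)) := by
    rw [tendsto_pi_nhds] at hconv
    intro i; exact hconv i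
  -- the limit is in ℓ²
  have ht2 : (0:ℝ) < (2:ℝ≥0∞).toReal := by rw [two_toReal]; norm_num
  have hfmemℓp : Memℓp f 2 := by
    apply memℓp_gen' (C := C ^ ((2:ℝ≥0∞).toReal))
    intro s
    have hlim : Tendsto (fun j => ∑ i ∈ s, ‖Y (ψ j) i‖ ^ ((2:ℝ≥0∞).toReal)) atTop
        (𝓝 (∑ i ∈ s, ‖f i‖ ^ ((2:ℝ≥0∞).toReal))) := by
      apply tendsto_finset_sum
      intro i _
      simp only [two_toReal, Real.rpow_two]
      exact (((hpt i).norm).pow 2)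
    refine le_of_tendsto hlim (Eventually.of_forall fun j => ?_)
    calc ∑ i ∈ s, ‖Y (ψ j) i‖ ^ ((2:ℝ≥0∞).toReal)
        ≤ ‖Y (ψ j)‖ ^ ((2:ℝ≥0∞).toReal) := lp.sum_rpow_le_norm_rpow ht2 _ s
      _ ≤ C ^ ((2:ℝ≥0∞).toReal) :=
          Real.rpow_le_rpow (norm_nonneg _) (hYnorm _) (le_of_lt ht2)
  set xlim : L2 d := ⟨f, hfmemℓp⟩ with hxlimdef
  have hxlim_apply : ∀ i, xlim i = f i := fun i => rfl
  -- the limit is nonzero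
  have hxlim0 : ε ≤ ‖f 0‖ := by
    refine ge_of_tendsto ((hpt 0).norm) (Eventually.of_forall fun j => ?_)
    have : Y (ψ j) 0 = x (n (ψ j)) (0 + m (ψ j)) := rfl
    rw [this, zero_add]
    exact (hm2 (ψ j)).le
  have hxlimne : xlim ≠ 0 := by
    intro h
    have : xlim 0 = 0 := by rw [h]; rfl
    rw [hxlim_apply] at this
    rw [this] at hxlim0
    simp at hxlim0
    linarith
  -- weak convergence
  have hweak : WeakTendsto (fun k => Y (ψ k)) xlim := by
    intro z
    rw [Metric.tendsto_atTop]
    intro εz hεz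
    set D : ℝ := C + ‖xlim‖ + 1 with hDdef
    have hD : 0 < D := by positivity
    set δ : ℝ := εz / (4 * D) with hδdef
    have hδ : 0 < δ := by positivity
    -- approximate z by a finitely supported zs
    have hz := lp.hasSum_single ENNReal.ofNat_ne_top z
    rw [HasSum, SummationFilter.unconditional_filter, Metric.tendsto_atTop] at hz
    obtain ⟨s, hs⟩ := hz δ hδ
    set zs : L2 d := ∑ i ∈ s, lp.single 2 i (z i) with hzsdef
    have hzzs : ‖z - zs‖ < δ := by
      have := hs s le_rfl
      rwa [dist_eq_norm, ← neg_sub, norm_neg] at this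
    -- inner products with zs
    have hinner_zs : ∀ g : L2 d, (inner ℝ g zs : ℝ) = ∑ i ∈ s, (inner ℝ (g i) (z i) : ℝ) := by
      intro g
      rw [hzsdef, inner_sum]
      exact Finset.sum_congr rfl fun i _ => lp.inner_single_right i (z i) g
    have hmid : Tendsto (fun j => (inner ℝ (Y (ψ j)) zs : ℝ)) atTop (𝓝 (inner ℝ xlim zs : ℝ)) := by
      simp only [hinner_zs]
      apply tendsto_finset_sum
      intro i _
      exact Tendsto.inner (hpt i) tendsto_const_nhds
    rw [Metric.tendsto_atTop] at hmid
    obtain ⟨J, hJ⟩ := hmid (εz/2) (by positivity)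
    refine ⟨J, fun j hj => ?_⟩
    have key : ∀ g : L2 d, ‖g‖ ≤ C + ‖xlim‖ →
        |(inner ℝ g (z - zs) : ℝ)| ≤ (C + ‖xlim‖) * δ := by
      intro g hg
      calc |(inner ℝ g (z - zs) : ℝ)| ≤ ‖g‖ * ‖z - zs‖ := abs_real_inner_le_norm _ _
        _ ≤ (C + ‖xlim‖) * δ := by
            apply mul_le_mul hg hzzs.le (norm_nonneg _)
            positivity
    have h1 : |(inner ℝ (Y (ψ j)) (z - zs) : ℝ)| ≤ (C + ‖xlim‖) * δ :=
      key _ ((hYnorm _).trans (by linarith [norm_nonneg xlim]))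
    have h2 : |(inner ℝ xlim (z - zs) : ℝ)| ≤ (C + ‖xlim‖) * δ :=
      key _ (by linarith)
    have h3 : |(inner ℝ (Y (ψ j)) zs : ℝ) - (inner ℝ xlim zs : ℝ)| < εz/2 := by
      have := hJ j hj
      rwa [Real.dist_eq] at this
    have hsplit : (inner ℝ (Y (ψ j)) z : ℝ) - (inner ℝ xlim z : ℝ)
        = (inner ℝ (Y (ψ j)) (z - zs) : ℝ) + ((inner ℝ (Y (ψ j)) zs : ℝ) - (inner ℝ xlim zs : ℝ))
          - (inner ℝ xlim (z - zs) : ℝ) := by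
      simp only [inner_sub_right]
      ring
    rw [Real.dist_eq, hsplit]
    have hδD : (C + ‖xlim‖) * δ ≤ εz/4 := by
      have hle : C + ‖xlim‖ ≤ D := by rw [hDdef]; linarith
      have hDne : D ≠ 0 := ne_of_gt hD
      calc (C + ‖xlim‖) * δ ≤ D * δ := mul_le_mul_of_nonneg_right hle hδ.le
        _ = εz/4 := by rw [hδdef]; field_simp
    have habs : |(inner ℝ (Y (ψ j)) (z - zs) : ℝ) + ((inner ℝ (Y (ψ j)) zs : ℝ) - (inner ℝ xlim zs : ℝ))
          - (inner ℝ xlim (z - zs) : ℝ)|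
        ≤ |(inner ℝ (Y (ψ j)) (z - zs) : ℝ)| + |(inner ℝ (Y (ψ j)) zs : ℝ) - (inner ℝ xlim zs : ℝ)|
          + |(inner ℝ xlim (z - zs) : ℝ)| := by
      apply (abs_sub _ _).trans
      gcongr
      exact abs_add_le _ _
    linarith
  -- assemble
  refine ⟨fun k => m (ψ k), fun k => n (ψ k), fun k => Y (ψ k), xlim, ?_, ?_, ?_, hweak, hxlimne⟩
  · apply tendsto_atTop_mono (fun k => (hm1 (ψ k)).trans' ?_)
    · exact tendsto_natCast_atTop_atTop
    · exact_mod_cast (hψ.id_le k)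
  · exact hnmono.comp hψ
  · intro k i; rfl
end
end

section
/- Let a: ℤ → GL(d, ℝ) be the piecewise-constant asymptotically hyperbolic system a_n = a₊ for n ≥ 0 and a_n = a₋ for n < 0, with a₊, a₋ hyperbolic. Then the kernel of the operator L on ℓ²(ℤ, ℝᵈ), (Lx)(n) = x(n+1) − a_n x(n), consists exactly of the sequences x with x(0) ∈ Eˢ(a₊) ∩ Eᵘ(a₋), x(n) = a₊ⁿ x(0) for n ≥ 0, and x(n) = a₋ⁿ x(0) for n ≤ 0; in particular dim ker L = dim (Eˢ(a₊) ∩ Eᵘ(a₋)). -/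
open Filter Topology

noncomputable section

/-- The action of a `d × d` real matrix on `EuclideanSpace ℝ (Fin d)`. -/
abbrev matOp {d : ℕ} (M : Matrix (Fin d) (Fin d) ℝ) :
    EuclideanSpace ℝ (Fin d) →L[ℝ] EuclideanSpace ℝ (Fin d) :=
  Matrix.toEuclideanCLM (𝕜 := ℝ) M

/-- The `ℝ`-linear inclusion of `EuclideanSpace ℝ (Fin d)` into `Fin d → ℂ`. -/
def complexify (d : ℕ) : (EuclideanSpace ℝ (Fin d)) →ₗ[ℝ] (Fin d → ℂ) :=
  (LinearMap.compLeft Complex.ofRealAm.toLinearMap (Fin d)).comp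
    (WithLp.linearEquiv 2 ℝ (Fin d → ℝ)).toLinearMap

/-- Real vectors whose complexification lies in the sum of the generalized eigenspaces
of `a` for eigenvalues in `s ⊆ ℂ`. -/
def genSpace {d : ℕ} (a : Matrix (Fin d) (Fin d) ℝ) (s : Set ℂ) :
    Submodule ℝ (EuclideanSpace ℝ (Fin d)) :=
  ((⨆ μ ∈ s, Module.End.maxGenEigenspace (Matrix.toLin' (a.map (Complex.ofReal))) μ
    ).restrictScalars ℝ).comap (complexify d)

/-- The stable spectral subspace `Eˢ(a)`. -/
def stableSpace {d : ℕ} (a : Matrix (Fin d) (Fin d) ℝ) :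
    Submodule ℝ (EuclideanSpace ℝ (Fin d)) := genSpace a {μ : ℂ | ‖μ‖ < 1}

/-- The unstable spectral subspace `Eᵘ(a)`. -/
def unstableSpace {d : ℕ} (a : Matrix (Fin d) (Fin d) ℝ) :
    Submodule ℝ (EuclideanSpace ℝ (Fin d)) := genSpace a {μ : ℂ | 1 < ‖μ‖}

/-- A real matrix is hyperbolic if it has no (complex) eigenvalue of absolute value one. -/
def IsHyperbolic {d : ℕ} (a : Matrix (Fin d) (Fin d) ℝ) : Prop :=
  ∀ μ : ℂ, Module.End.HasEigenvalue (Matrix.toLin' (a.map (Complex.ofReal))) μ → ‖μ‖ ≠ 1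


section Helpers
open Filter Topology Module

/-- domination of `n * r^n` by a geometric `C * s^n` when `0 ≤ r < s`. -/
lemma geo_dom {r s : ℝ} (hr : 0 ≤ r) (hrs : r < s) :
    ∃ C : ℝ, 0 ≤ C ∧ ∀ n : ℕ, (n : ℝ) * r ^ n ≤ C * s ^ n := by
  have hs : 0 < s := lt_of_le_of_lt hr hrs
  have hq : ‖r / s‖ < 1 := by
    rw [Real.norm_eq_abs, abs_of_nonneg (div_nonneg hr hs.le)]
    rw [div_lt_one hs]; exact hrs
  have hsum : Summable fun n : ℕ => (n : ℝ) ^ 1 * (r / s) ^ n :=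
    summable_pow_mul_geometric_of_norm_lt_one 1 hq
  have hb : BddAbove (Set.range fun n : ℕ => (n : ℝ) ^ 1 * (r / s) ^ n) :=
    hsum.tendsto_atTop_zero.bddAbove_range
  obtain ⟨C, hC⟩ := hb
  refine ⟨C, ?_, ?_⟩
  · have := hC (Set.mem_range_self 0); simpa using this
  · intro n
    have h1 : (n : ℝ) * (r / s) ^ n ≤ C := by
      have := hC (Set.mem_range_self n); simpa using this
    have h2 : (n : ℝ) * (r / s) ^ n * s ^ n ≤ C * s ^ n :=
      mul_le_mul_of_nonneg_right h1 (pow_nonneg hs.le n)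
    calc (n : ℝ) * r ^ n = (n : ℝ) * (r / s) ^ n * s ^ n := by
          rw [mul_assoc, ← mul_pow, div_mul_cancel₀ _ hs.ne']
      _ ≤ C * s ^ n := h2

section Decay
variable {V : Type*} [NormedAddCommGroup V] [NormedSpace ℂ V]

/-- the geometric decay property of a vector under iteration of `T`. -/
def GeoDecay (T : Module.End ℂ V) (w : V) : Prop :=
  ∃ C ρ : ℝ, 0 ≤ C ∧ 0 ≤ ρ ∧ ρ < 1 ∧ ∀ n : ℕ, ‖(T ^ n) w‖ ≤ C * ρ ^ n

lemma geoDecay_zero (T : Module.End ℂ V) : GeoDecay T 0 :=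
  ⟨0, 1/2, le_refl _, by norm_num, by norm_num, fun n => by simp⟩

lemma GeoDecay.add {T : Module.End ℂ V} {w₁ w₂ : V} (h₁ : GeoDecay T w₁) (h₂ : GeoDecay T w₂) :
    GeoDecay T (w₁ + w₂) := by
  obtain ⟨C₁, ρ₁, hC₁, hρ₁, hρ₁', hb₁⟩ := h₁
  obtain ⟨C₂, ρ₂, hC₂, hρ₂, hρ₂', hb₂⟩ := h₂
  refine ⟨C₁ + C₂, max ρ₁ ρ₂, by positivity, le_max_of_le_left hρ₁, max_lt hρ₁' hρ₂', fun n => ?_⟩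
  have : ‖(T ^ n) (w₁ + w₂)‖ ≤ ‖(T ^ n) w₁‖ + ‖(T ^ n) w₂‖ := by
    rw [map_add]; exact norm_add_le _ _
  refine this.trans ?_
  have e₁ : ρ₁ ^ n ≤ (max ρ₁ ρ₂) ^ n := pow_le_pow_left₀ hρ₁ (le_max_left _ _) n
  have e₂ : ρ₂ ^ n ≤ (max ρ₁ ρ₂) ^ n := pow_le_pow_left₀ hρ₂ (le_max_right _ _) n
  calc ‖(T ^ n) w₁‖ + ‖(T ^ n) w₂‖ ≤ C₁ * ρ₁ ^ n + C₂ * ρ₂ ^ n := add_le_add (hb₁ n) (hb₂ n)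
    _ ≤ C₁ * (max ρ₁ ρ₂) ^ n + C₂ * (max ρ₁ ρ₂) ^ n :=
        add_le_add (mul_le_mul_of_nonneg_left e₁ hC₁) (mul_le_mul_of_nonneg_left e₂ hC₂)
    _ = (C₁ + C₂) * (max ρ₁ ρ₂) ^ n := by ring

/-- decay for nilpotent-shifted vectors : if `(T - μ)^k w = 0` and `‖μ‖ < 1` then geometric
decay. -/
lemma geoDecay_of_pow_sub_eq_zero {T : Module.End ℂ V} {μ : ℂ} (hμ : ‖μ‖ < 1) :
    ∀ (k : ℕ) (w : V), ((T - μ • 1) ^ k) w = 0 → GeoDecay T w := by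
  intro k
  induction k with
  | zero => intro w hw; simp at hw; simp [hw, geoDecay_zero]
  | succ k ih =>
    intro w hw
    have hw' : ((T - μ • 1) ^ k) ((T - μ • 1) w) = 0 := by
      rw [← Module.End.mul_apply, ← pow_succ]; exact hw
    obtain ⟨C', ρ', hC', hρ', hρ'', hb⟩ := ih _ hw'
    set σ : ℝ := (1 + max ρ' ‖μ‖) / 2 with hσdef
    have hρσ : ρ' ≤ σ := by
      have : max ρ' ‖μ‖ < 1 := max_lt hρ'' hμ
      have := le_max_left ρ' ‖μ‖
      simp only [hσdef]; linarith
    have hμσ : ‖μ‖ ≤ σ := by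
      have : max ρ' ‖μ‖ < 1 := max_lt hρ'' hμ
      have := le_max_right ρ' ‖μ‖
      simp only [hσdef]; linarith
    have hσ0 : 0 < σ := by
      have := norm_nonneg μ
      have := le_max_right ρ' ‖μ‖
      simp only [hσdef]; linarith
    have hσ1 : σ < 1 := by
      have : max ρ' ‖μ‖ < 1 := max_lt hρ'' hμ
      simp only [hσdef]; linarith
    -- recurrence : T^(n+1) w = T^n ((T - μ•1) w) + μ • T^n w
    have hrec : ∀ n : ℕ, (T ^ (n+1)) w = (T ^ n) ((T - μ • 1) w) + μ • (T ^ n) w := by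
      intro n
      have : (T ^ (n+1)) w = (T ^ n) (T w) := by
        rw [pow_succ, Module.End.mul_apply]
      rw [this]
      have : T w = (T - μ • 1) w + μ • w := by simp
      rw [this, map_add, map_smul]
    -- bound ‖T^n w‖ ≤ (‖w‖ + C' * n * σ⁻¹) * σ^n
    have key : ∀ n : ℕ, ‖(T ^ n) w‖ ≤ (‖w‖ + C' * n * σ⁻¹) * σ ^ n := by
      intro n
      induction n with
      | zero => simp
      | succ n ihn =>
        rw [hrec n]
        have h1 : ‖(T ^ n) ((T - μ • 1) w) + μ • (T ^ n) w‖ ≤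
            C' * ρ' ^ n + ‖μ‖ * ‖(T ^ n) w‖ := by
          refine (norm_add_le _ _).trans (add_le_add (hb n) ?_)
          rw [norm_smul]
        refine h1.trans ?_
        have h2 : ‖μ‖ * ‖(T ^ n) w‖ ≤ σ * ((‖w‖ + C' * n * σ⁻¹) * σ ^ n) := by
          apply mul_le_mul hμσ ihn (norm_nonneg _) hσ0.le
        have h3 : C' * ρ' ^ n ≤ C' * σ ^ n :=
          mul_le_mul_of_nonneg_left (pow_le_pow_left₀ hρ' hρσ n) hC'
        calc C' * ρ' ^ n + ‖μ‖ * ‖(T ^ n) w‖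
            ≤ C' * σ ^ n + σ * ((‖w‖ + C' * n * σ⁻¹) * σ ^ n) := add_le_add h3 h2
          _ = (‖w‖ + C' * ((n+1 : ℕ) : ℝ) * σ⁻¹) * σ ^ (n+1) := by
              push_cast
              field_simp
              ring
    -- now dominate `n * σ^n` geometrically
    set τ : ℝ := (1 + σ) / 2 with hτdef
    have hστ : σ < τ := by simp only [hτdef]; linarith
    have hτ1 : τ < 1 := by simp only [hτdef]; linarith
    have hτ0 : 0 ≤ τ := by simp only [hτdef]; linarith
    obtain ⟨Cg, hCg, hgd⟩ := geo_dom hσ0.le hστ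
    refine ⟨‖w‖ + C' * σ⁻¹ * Cg, τ, by positivity, hτ0, hτ1, fun n => ?_⟩
    have h4 : ‖(T ^ n) w‖ ≤ ‖w‖ * σ ^ n + (C' * σ⁻¹) * ((n:ℝ) * σ ^ n) := by
      refine (key n).trans (le_of_eq ?_); ring
    refine h4.trans ?_
    have h5 : ‖w‖ * σ ^ n ≤ ‖w‖ * τ ^ n :=
      mul_le_mul_of_nonneg_left (pow_le_pow_left₀ hσ0.le hστ.le n) (norm_nonneg _)
    have h6 : (C' * σ⁻¹) * ((n:ℝ) * σ ^ n) ≤ (C' * σ⁻¹) * (Cg * τ ^ n) :=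
      mul_le_mul_of_nonneg_left (hgd n) (by positivity)
    calc ‖w‖ * σ ^ n + (C' * σ⁻¹) * ((n:ℝ) * σ ^ n)
        ≤ ‖w‖ * τ ^ n + (C' * σ⁻¹) * (Cg * τ ^ n) := add_le_add h5 h6
      _ = (‖w‖ + C' * σ⁻¹ * Cg) * τ ^ n := by ring

/-- per-vector geometric decay on the sup of stable generalized eigenspaces. -/
lemma geoDecay_of_mem_iSup {T : Module.End ℂ V} {w : V}
    (hw : w ∈ ⨆ μ ∈ {μ : ℂ | ‖μ‖ < 1}, T.maxGenEigenspace μ) : GeoDecay T w := by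
  rw [iSup_subtype'] at hw
  refine Submodule.iSup_induction (motive := GeoDecay T) _ hw ?_ (geoDecay_zero T)
    (fun x y hx hy => hx.add hy)
  intro i x hx
  obtain ⟨k, hk⟩ := (Module.End.mem_maxGenEigenspace _ _ _).mp hx
  exact geoDecay_of_pow_sub_eq_zero i.2 k x hk



lemma GeoDecay.tendsto {T : Module.End ℂ V} {w : V} (h : GeoDecay T w) :
    Tendsto (fun n : ℕ => (T ^ n) w) atTop (𝓝 0) := by
  obtain ⟨C, ρ, hC, hρ0, hρ1, hb⟩ := h
  rw [tendsto_zero_iff_norm_tendsto_zero]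
  refine squeeze_zero (fun n => norm_nonneg _) hb ?_
  simpa using (tendsto_pow_atTop_nhds_zero_of_lt_one hρ0 hρ1).const_mul C

lemma geoDecay_uniform [FiniteDimensional ℂ V] {T : Module.End ℂ V} (E : Submodule ℂ V)
    (h : ∀ w ∈ E, GeoDecay T w) :
    ∃ C ρ : ℝ, 0 ≤ C ∧ 0 ≤ ρ ∧ ρ < 1 ∧ ∀ w ∈ E, ∀ n : ℕ, ‖(T ^ n) w‖ ≤ C * ρ ^ n * ‖w‖ := by
  classical
  set m := Module.finrank ℂ E with hm
  let b : Basis (Fin m) ℂ E := Module.finBasis ℂ E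
  have H : ∀ i : Fin m, GeoDecay T ((b i : V)) := fun i => h _ (b i).2
  choose Cf ρf hCf hρ0f hρ1f hbf using H
  let Li : Fin m → (E →L[ℂ] ℂ) := fun i => LinearMap.toContinuousLinearMap (b.coord i)
  set ρn : NNReal := Finset.univ.sup (fun i => (⟨ρf i, hρ0f i⟩ : NNReal)) with hρn
  set ρ : ℝ := (ρn : ℝ) with hρ
  have hρlt : ρ < 1 := by
    rw [hρ, ← NNReal.coe_one, NNReal.coe_lt_coe]
    refine Finset.sup_lt_iff (by norm_num) |>.mpr fun i _ => ?_
    exact_mod_cast hρ1f i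
  have hρle : ∀ i, ρf i ≤ ρ := fun i => by
    rw [hρ]
    exact_mod_cast Finset.le_sup (f := fun i => (⟨ρf i, hρ0f i⟩ : NNReal)) (Finset.mem_univ i)
  refine ⟨∑ i, ‖Li i‖ * Cf i, ρ,
    Finset.sum_nonneg fun i _ => mul_nonneg (norm_nonneg (Li i)) (hCf i), ρn.2, hρlt,
    fun w hw n => ?_⟩
  set w' : E := ⟨w, hw⟩ with hw'
  have hrepr : w = ∑ i, b.repr w' i • (b i : V) := by
    have hsr := b.sum_repr w'
    have h3 : w = (w' : V) := rfl
    rw [h3]; conv_lhs => rw [← hsr]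
    simp only [Submodule.coe_sum, Submodule.coe_smul]
  have hTn : (T ^ n) w = ∑ i, b.repr w' i • (T ^ n) (b i : V) := by
    rw [hrepr, map_sum]
    simp [map_smul]
  rw [hTn]
  refine (norm_sum_le _ _).trans ?_
  have hterm : ∀ i, ‖b.repr w' i • (T ^ n) (b i : V)‖ ≤ (‖Li i‖ * Cf i) * ρ ^ n * ‖w‖ := by
    intro i
    rw [norm_smul]
    have hco : ‖b.repr w' i‖ ≤ ‖Li i‖ * ‖w‖ := by
      have : b.repr w' i = Li i w' := rfl
      rw [this]
      have := (Li i).le_opNorm w'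
      simpa using this
    have hb2 : ‖(T ^ n) (b i : V)‖ ≤ Cf i * ρ ^ n := by
      refine (hbf i n).trans ?_
      exact mul_le_mul_of_nonneg_left (pow_le_pow_left₀ (hρ0f i) (hρle i) n) (hCf i)
    calc ‖b.repr w' i‖ * ‖(T ^ n) (b i : V)‖
        ≤ (‖Li i‖ * ‖w‖) * (Cf i * ρ ^ n) :=
          mul_le_mul hco hb2 (norm_nonneg _) (by positivity)
      _ = (‖Li i‖ * Cf i) * ρ ^ n * ‖w‖ := by ring
  refine (Finset.sum_le_sum fun i _ => hterm i).trans (le_of_eq ?_)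
  rw [← Finset.sum_mul, ← Finset.sum_mul]

lemma maxGen_le_inv (Tu : (Module.End ℂ V)ˣ) {μ : ℂ} (hμ : μ ≠ 0) :
    (Tu : Module.End ℂ V).maxGenEigenspace μ ≤
      (↑Tu⁻¹ : Module.End ℂ V).maxGenEigenspace μ⁻¹ := by
  intro w hw
  obtain ⟨k, hk⟩ := (Module.End.mem_maxGenEigenspace _ _ _).mp hw
  rw [Module.End.mem_maxGenEigenspace]
  refine ⟨k, ?_⟩
  have h1 : (↑Tu⁻¹ : Module.End ℂ V) * ↑Tu = 1 := by
    rw [← Units.val_mul, inv_mul_cancel, Units.val_one]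
  have key : ((↑Tu⁻¹ : Module.End ℂ V) - μ⁻¹ • 1) =
      ((-μ⁻¹) • (↑Tu⁻¹ : Module.End ℂ V)) * ((↑Tu : Module.End ℂ V) - μ • 1) := by
    rw [smul_mul_assoc, mul_sub, h1, mul_smul_comm, mul_one, smul_sub, smul_smul]
    rw [neg_mul, inv_mul_cancel₀ hμ]
    rw [neg_smul, neg_smul, one_smul, sub_neg_eq_add]
    abel
  have comm : Commute ((-μ⁻¹) • (↑Tu⁻¹ : Module.End ℂ V))
      ((↑Tu : Module.End ℂ V) - μ • 1) := by
    have c1 : Commute (↑Tu⁻¹ : Module.End ℂ V) (↑Tu : Module.End ℂ V) := by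
      unfold Commute SemiconjBy
      rw [← Units.val_mul, ← Units.val_mul, inv_mul_cancel, mul_inv_cancel]
    have c2 : Commute (↑Tu⁻¹ : Module.End ℂ V) (μ • (1 : Module.End ℂ V)) :=
      (Commute.one_right _).smul_right μ
    exact (c1.sub_right c2).smul_left (-μ⁻¹)
  rw [key, comm.mul_pow, Module.End.mul_apply, hk, map_zero]

lemma maxGen_zero_unit (Tu : (Module.End ℂ V)ˣ) :
    (Tu : Module.End ℂ V).maxGenEigenspace 0 = ⊥ := by
  rw [eq_bot_iff]
  intro w hw
  obtain ⟨k, hk⟩ := (Module.End.mem_maxGenEigenspace _ _ _).mp hw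
  simp only [zero_smul, sub_zero] at hk
  have h1 : ((↑(Tu ^ k)⁻¹ : Module.End ℂ V) * ↑(Tu ^ k)) w = w := by
    rw [← Units.val_mul, inv_mul_cancel, Units.val_one, Module.End.one_apply]
  rw [Submodule.mem_bot]
  rw [← h1, Module.End.mul_apply]
  have h2 : (↑(Tu ^ k) : Module.End ℂ V) w = 0 := by
    rw [Units.val_pow_eq_pow_val]; exact hk
  rw [h2, map_zero]

lemma mem_iSup_map {s : Set ℂ} {T g : Module.End ℂ V} (hc : Commute T g) {w : V}
    (hw : w ∈ ⨆ μ ∈ s, T.maxGenEigenspace μ) : g w ∈ ⨆ μ ∈ s, T.maxGenEigenspace μ := by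
  rw [iSup_subtype'] at hw ⊢
  refine Submodule.iSup_induction (motive := fun x => g x ∈ ⨆ i : s, T.maxGenEigenspace (i : ℂ)) _ hw
    ?_ (by simp) (fun x y hx hy => by simp only [map_add]; exact add_mem hx hy)
  intro i x hx
  exact Submodule.mem_iSup_of_mem i
    (Module.End.mapsTo_maxGenEigenspace_of_comm hc (i : ℂ) hx)

lemma maxGen_ne_bot_hasEigenvalue {K V₂ : Type*} [Field K] [AddCommGroup V₂] [Module K V₂]
    [FiniteDimensional K V₂] {T : Module.End K V₂} {μ : K}
    (h : T.maxGenEigenspace μ ≠ ⊥) : T.HasEigenvalue μ := by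
  have h1 : T.HasUnifEigenvalue μ ⊤ := h
  exact h1.lt zero_lt_one

lemma stable_sup_unstable_eq_top [FiniteDimensional ℂ V] {T : Module.End ℂ V}
    (hyp : ∀ μ : ℂ, T.HasEigenvalue μ → ‖μ‖ ≠ 1) :
    (⨆ μ ∈ {μ : ℂ | ‖μ‖ < 1}, T.maxGenEigenspace μ) ⊔
      (⨆ μ ∈ {μ : ℂ | 1 < ‖μ‖}, T.maxGenEigenspace μ) = ⊤ := by
  rw [eq_top_iff, ← Module.End.iSup_maxGenEigenspace_eq_top T]
  refine iSup_le fun μ => ?_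
  rcases lt_trichotomy ‖μ‖ 1 with h | h | h
  · exact le_sup_of_le_left
      (le_iSup₂ (f := fun μ _ => T.maxGenEigenspace μ) μ h)
  · by_cases hb : T.maxGenEigenspace μ = ⊥
    · rw [hb]; exact bot_le
    · exact absurd h (hyp μ (maxGen_ne_bot_hasEigenvalue hb))
  · exact le_sup_of_le_right
      (le_iSup₂ (f := fun μ _ => T.maxGenEigenspace μ) μ h)

lemma mem_stable_of_tendsto [FiniteDimensional ℂ V] (Tu : (Module.End ℂ V)ˣ)
    (hyp : ∀ μ : ℂ, (↑Tu : Module.End ℂ V).HasEigenvalue μ → ‖μ‖ ≠ 1) {w : V}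
    (hw : Tendsto (fun n : ℕ => ((↑Tu : Module.End ℂ V) ^ n) w) atTop (𝓝 0)) :
    w ∈ ⨆ μ ∈ {μ : ℂ | ‖μ‖ < 1}, (↑Tu : Module.End ℂ V).maxGenEigenspace μ := by
  set T := (↑Tu : Module.End ℂ V) with hT
  set S := ⨆ μ ∈ {μ : ℂ | ‖μ‖ < 1}, T.maxGenEigenspace μ with hS
  set U := ⨆ μ ∈ {μ : ℂ | 1 < ‖μ‖}, T.maxGenEigenspace μ with hU
  have htop : S ⊔ U = ⊤ := stable_sup_unstable_eq_top hyp
  obtain ⟨ws, hws, wu, hwu, hsum⟩ := Submodule.mem_sup.mp (htop ▸ Submodule.mem_top (x := w))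
  suffices hzero : wu = 0 by rw [← hsum, hzero, add_zero]; exact hws
  have hUle : U ≤ ⨆ μ ∈ {μ : ℂ | ‖μ‖ < 1}, (↑Tu⁻¹ : Module.End ℂ V).maxGenEigenspace μ := by
    refine iSup₂_le fun μ hμ => ?_
    have hμ1 : (1 : ℝ) < ‖μ‖ := hμ
    have hμ0 : μ ≠ 0 := by
      intro h; rw [h] at hμ1; simp at hμ1; linarith
    refine (maxGen_le_inv Tu hμ0).trans ?_
    refine le_iSup₂ (f := fun μ _ => (↑Tu⁻¹ : Module.End ℂ V).maxGenEigenspace μ) μ⁻¹ ?_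
    show ‖μ⁻¹‖ < 1
    rw [norm_inv]
    exact inv_lt_one_of_one_lt₀ hμ1
  obtain ⟨C, ρ, hC, hρ0, hρ1, hbd⟩ :=
    geoDecay_uniform (T := (↑Tu⁻¹ : Module.End ℂ V)) U
      (fun v hv => geoDecay_of_mem_iSup (hUle hv))
  have h1 : Tendsto (fun n : ℕ => (T ^ n) ws) atTop (𝓝 0) :=
    (geoDecay_of_mem_iSup hws).tendsto
  have h2 : Tendsto (fun n : ℕ => (T ^ n) wu) atTop (𝓝 0) := by
    have he : (fun n : ℕ => (T ^ n) wu) = fun n : ℕ => (T ^ n) w - (T ^ n) ws := by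
      funext n
      rw [← hsum, map_add]
      abel
    rw [he]
    simpa using hw.sub h1
  have hwu_bound : ∀ n : ℕ, ‖wu‖ ≤ C * ρ ^ n * ‖(T ^ n) wu‖ := by
    intro n
    have hmem : (T ^ n) wu ∈ U := mem_iSup_map ((Commute.refl T).pow_right n) hwu
    have hb2 := hbd _ hmem n
    have heq : (((↑Tu⁻¹ : Module.End ℂ V)) ^ n) ((T ^ n) wu) = wu := by
      have hone : (↑Tu⁻¹ : Module.End ℂ V) * T = 1 := by
        rw [hT, ← Units.val_mul, inv_mul_cancel, Units.val_one]
      have c : Commute (↑Tu⁻¹ : Module.End ℂ V) T := by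
        unfold Commute SemiconjBy
        rw [hT, ← Units.val_mul, ← Units.val_mul, inv_mul_cancel, mul_inv_cancel]
      rw [← Module.End.mul_apply, ← c.mul_pow, hone, one_pow, Module.End.one_apply]
    rw [heq] at hb2
    exact hb2
  have htend : Tendsto (fun n : ℕ => C * ρ ^ n * ‖(T ^ n) wu‖) atTop (𝓝 0) := by
    have hA : Tendsto (fun n : ℕ => C * ρ ^ n) atTop (𝓝 0) := by
      simpa using (tendsto_pow_atTop_nhds_zero_of_lt_one hρ0 hρ1).const_mul C
    have hB : Tendsto (fun n : ℕ => ‖(T ^ n) wu‖) atTop (𝓝 0) := by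
      simpa using h2.norm
    simpa using hA.mul hB
  have hle : ‖wu‖ ≤ 0 := ge_of_tendsto' htend hwu_bound
  exact norm_le_zero_iff.mp hle




lemma unstable_le_stable_inv (Tu : (Module.End ℂ V)ˣ) :
    (⨆ μ ∈ {μ : ℂ | 1 < ‖μ‖}, (↑Tu : Module.End ℂ V).maxGenEigenspace μ) ≤
      ⨆ μ ∈ {μ : ℂ | ‖μ‖ < 1}, (↑Tu⁻¹ : Module.End ℂ V).maxGenEigenspace μ := by
  refine iSup₂_le fun μ hμ => ?_
  have hμ1 : (1 : ℝ) < ‖μ‖ := hμ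
  have hμ0 : μ ≠ 0 := by
    intro h; rw [h] at hμ1; simp at hμ1; linarith
  refine (maxGen_le_inv Tu hμ0).trans ?_
  refine le_iSup₂ (f := fun μ _ => (↑Tu⁻¹ : Module.End ℂ V).maxGenEigenspace μ) μ⁻¹ ?_
  show ‖μ⁻¹‖ < 1
  rw [norm_inv]
  exact inv_lt_one_of_one_lt₀ hμ1

lemma stable_inv_le_unstable (Tu : (Module.End ℂ V)ˣ) :
    (⨆ μ ∈ {μ : ℂ | ‖μ‖ < 1}, (↑Tu⁻¹ : Module.End ℂ V).maxGenEigenspace μ) ≤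
      ⨆ μ ∈ {μ : ℂ | 1 < ‖μ‖}, (↑Tu : Module.End ℂ V).maxGenEigenspace μ := by
  refine iSup₂_le fun μ hμ => ?_
  by_cases hμ0 : μ = 0
  · rw [hμ0, maxGen_zero_unit Tu⁻¹]; exact bot_le
  · have h1 := maxGen_le_inv Tu⁻¹ hμ0
    rw [inv_inv] at h1
    refine h1.trans ?_
    refine le_iSup₂ (f := fun μ _ => (↑Tu : Module.End ℂ V).maxGenEigenspace μ) μ⁻¹ ?_
    show 1 < ‖μ⁻¹‖
    rw [norm_inv]
    have hμlt : ‖μ‖ < 1 := hμ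
    exact (one_lt_inv₀ (norm_pos_iff.mpr hμ0)).mpr hμlt

lemma hyp_inv [FiniteDimensional ℂ V] (Tu : (Module.End ℂ V)ˣ)
    (hyp : ∀ μ : ℂ, (↑Tu : Module.End ℂ V).HasEigenvalue μ → ‖μ‖ ≠ 1) :
    ∀ μ : ℂ, (↑Tu⁻¹ : Module.End ℂ V).HasEigenvalue μ → ‖μ‖ ≠ 1 := by
  intro μ hev
  have hne : (↑Tu⁻¹ : Module.End ℂ V).maxGenEigenspace μ ≠ ⊥ := by
    have h2 : Module.End.HasUnifEigenvalue (↑Tu⁻¹ : Module.End ℂ V) μ 1 := hev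
    exact h2.le le_top
  have hμ0 : μ ≠ 0 := by
    intro h
    rw [h] at hne
    exact hne (maxGen_zero_unit Tu⁻¹)
  have h3 := maxGen_le_inv Tu⁻¹ hμ0
  rw [inv_inv] at h3
  have h4 : (↑Tu : Module.End ℂ V).maxGenEigenspace μ⁻¹ ≠ ⊥ := by
    intro hbot
    rw [hbot, le_bot_iff] at h3
    exact hne h3
  have h5 := hyp μ⁻¹ (maxGen_ne_bot_hasEigenvalue h4)
  intro h6
  apply h5
  rw [norm_inv, h6, inv_one]



end Decay
end Helpers

section Transfer
variable {d : ℕ}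

@[simp] lemma complexify_apply (v : EuclideanSpace ℝ (Fin d)) (i : Fin d) :
    complexify d v i = ((v i : ℝ) : ℂ) := rfl

/-- matrix action on `Fin d → ℂ` after complexification, as a monoid hom. -/
def mHom (d : ℕ) : Matrix (Fin d) (Fin d) ℝ →* Module.End ℂ (Fin d → ℂ) where
  toFun A := Matrix.toLin' (A.map Complex.ofReal)
  map_one' := by
    show Matrix.toLin' ((1 : Matrix (Fin d) (Fin d) ℝ).map Complex.ofReal) = 1
    have h : ((1 : Matrix (Fin d) (Fin d) ℝ).map Complex.ofReal) = 1 :=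
      Matrix.map_one _ Complex.ofReal_zero Complex.ofReal_one
    rw [h]
    ext v i
    simp [Matrix.toLin'_apply]
  map_mul' A B := by
    show Matrix.toLin' ((A * B).map Complex.ofReal) =
      Matrix.toLin' (A.map Complex.ofReal) * Matrix.toLin' (B.map Complex.ofReal)
    have h : ((A * B).map Complex.ofReal) =
        A.map Complex.ofReal * B.map Complex.ofReal := by
      ext i j
      simp only [Matrix.mul_apply, Matrix.map_apply]
      push_cast
      ring
    rw [h, Matrix.toLin'_mul]
    rfl

lemma matOp_one (v : EuclideanSpace ℝ (Fin d)) : matOp (1 : Matrix (Fin d) (Fin d) ℝ) v = v := by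
  have h : matOp (1 : Matrix (Fin d) (Fin d) ℝ) = 1 := map_one _
  rw [h, ContinuousLinearMap.one_apply]

lemma matOp_mul (A B : Matrix (Fin d) (Fin d) ℝ) (v : EuclideanSpace ℝ (Fin d)) :
    matOp (A * B) v = matOp A (matOp B v) := by
  have h : matOp (A * B) = matOp A * matOp B := map_mul _ _ _
  rw [h, ContinuousLinearMap.mul_apply]

lemma complexify_matOp (M : Matrix (Fin d) (Fin d) ℝ) (v : EuclideanSpace ℝ (Fin d)) :
    complexify d (matOp M v) = mHom d M (complexify d v) := by
  funext i
  show (((matOp M v) i : ℝ) : ℂ) = (Matrix.toLin' (M.map Complex.ofReal)) (complexify d v) i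
  have h1 : (matOp M v) i = (M.mulVec (WithLp.equiv 2 (Fin d → ℝ) v)) i := by
    have h0 := Matrix.ofLp_toEuclideanCLM (𝕜 := ℝ) M v
    have h2 := congrFun h0 i
    simpa [Matrix.toLin'_apply] using h2
  rw [h1, Matrix.toLin'_apply]
  show ((((M.mulVec (WithLp.equiv 2 (Fin d → ℝ) v)) i : ℝ)) : ℂ) =
    ((M.map Complex.ofReal).mulVec (complexify d v)) i
  simp only [Matrix.mulVec, dotProduct, Matrix.map_apply]
  push_cast
  rfl

lemma complexify_matOp_pow (M : Matrix (Fin d) (Fin d) ℝ) (n : ℕ)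
    (v : EuclideanSpace ℝ (Fin d)) :
    complexify d (matOp (M ^ n) v) = ((mHom d M) ^ n) (complexify d v) := by
  induction n generalizing v with
  | zero =>
    rw [pow_zero, pow_zero, matOp_one, Module.End.one_apply]
  | succ n ih =>
    have h1 : matOp (M ^ (n+1)) v = matOp (M ^ n) (matOp M v) := by
      rw [pow_succ, matOp_mul]
    rw [h1, ih, complexify_matOp, pow_succ, Module.End.mul_apply]

lemma mem_genSpace_iff {a : Matrix (Fin d) (Fin d) ℝ} {s : Set ℂ}
    {v : EuclideanSpace ℝ (Fin d)} :
    v ∈ genSpace a s ↔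
      complexify d v ∈ ⨆ μ ∈ s, (mHom d a).maxGenEigenspace μ := Iff.rfl

/-- real part map, a left inverse of `complexify`. -/
def reLin (d : ℕ) : (Fin d → ℂ) →ₗ[ℝ] EuclideanSpace ℝ (Fin d) :=
  (WithLp.linearEquiv 2 ℝ (Fin d → ℝ)).symm.toLinearMap.comp
    (LinearMap.compLeft Complex.reLm (Fin d))

lemma reLin_complexify (v : EuclideanSpace ℝ (Fin d)) : reLin d (complexify d v) = v := rfl

end Transfer

section MainSec
open Filter Topology Module

set_option maxHeartbeats 1000000 in
/-- For the piecewise-constant asymptotically hyperbolic system `a_n = a₊` (`n ≥ 0`),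
`a_n = a₋` (`n < 0`), the kernel of `(Lx)(n) = x(n+1) − a_n x(n)` on `ℓ²(ℤ, ℝᵈ)`
consists exactly of the sequences `x` with `x(0) ∈ Eˢ(a₊) ∩ Eᵘ(a₋)`,
`x(n) = a₊ⁿ x(0)` for `n ≥ 0` and `x(n) = a₋ⁿ x(0)` for `n ≤ 0`; in particular
`dim ker L = dim (Eˢ(a₊) ∩ Eᵘ(a₋))`. -/
theorem kernel_of_piecewise_constant_system {d : ℕ}
    (up um : (Matrix (Fin d) (Fin d) ℝ)ˣ)
    (aplus aminus : Matrix (Fin d) (Fin d) ℝ)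
    (hup : (up : Matrix (Fin d) (Fin d) ℝ) = aplus)
    (hum : (um : Matrix (Fin d) (Fin d) ℝ) = aminus)
    (hplus_hyp : IsHyperbolic aplus) (hminus_hyp : IsHyperbolic aminus)
    (a : ℤ → Matrix (Fin d) (Fin d) ℝ)
    (ha : ∀ n : ℤ, a n = if 0 ≤ n then aplus else aminus)
    (L : L2 d →L[ℝ] L2 d)
    (hL : ∀ (x : L2 d) (n : ℤ), (L x) n = x (n + 1) - matOp (a n) (x n)) :
    ((LinearMap.ker (L : L2 d →ₗ[ℝ] L2 d) : Set (L2 d)) =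
      {x : L2 d | x 0 ∈ stableSpace aplus ⊓ unstableSpace aminus ∧
        (∀ n : ℤ, 0 ≤ n → x n = matOp ((up ^ n : (Matrix (Fin d) (Fin d) ℝ)ˣ) : Matrix (Fin d) (Fin d) ℝ) (x 0)) ∧
        (∀ n : ℤ, n ≤ 0 → x n = matOp ((um ^ n : (Matrix (Fin d) (Fin d) ℝ)ˣ) : Matrix (Fin d) (Fin d) ℝ) (x 0))}) ∧
    Module.finrank ℝ (LinearMap.ker (L : L2 d →ₗ[ℝ] L2 d)) =
      Module.finrank ℝ ↥(stableSpace aplus ⊓ unstableSpace aminus) := by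
  classical
  -- complexified dynamics as units of endomorphisms
  set Tpu : (Module.End ℂ (Fin d → ℂ))ˣ := Units.map (mHom d) up with hTpudef
  set Tmu : (Module.End ℂ (Fin d → ℂ))ˣ := Units.map (mHom d) um with hTmudef
  have hTpu : (↑Tpu : Module.End ℂ (Fin d → ℂ)) = mHom d aplus := by
    rw [hTpudef, Units.coe_map]; rw [hup]
  have hTmu : (↑Tmu : Module.End ℂ (Fin d → ℂ)) = mHom d aminus := by
    rw [hTmudef, Units.coe_map]; rw [hum]
  have hTmuinv : (↑(Tmu⁻¹) : Module.End ℂ (Fin d → ℂ)) =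
      mHom d ((um⁻¹ : (Matrix (Fin d) (Fin d) ℝ)ˣ) : Matrix (Fin d) (Fin d) ℝ) := by
    rw [hTmudef, ← map_inv (Units.map (mHom d)) um, Units.coe_map]
  have hypP : ∀ μ : ℂ, (↑Tpu : Module.End ℂ (Fin d → ℂ)).HasEigenvalue μ → ‖μ‖ ≠ 1 := by
    intro μ h; rw [hTpu] at h; exact hplus_hyp μ h
  have hypM : ∀ μ : ℂ, (↑Tmu : Module.End ℂ (Fin d → ℂ)).HasEigenvalue μ → ‖μ‖ ≠ 1 := by
    intro μ h; rw [hTmu] at h; exact hminus_hyp μ h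
  -- norm transfer constants
  set rC : (Fin d → ℂ) →L[ℝ] EuclideanSpace ℝ (Fin d) :=
    LinearMap.toContinuousLinearMap (reLin d) with hrCdef
  have hKr : ∀ w : Fin d → ℂ, ‖reLin d w‖ ≤ ‖rC‖ * ‖w‖ := by
    intro w
    have h := rC.le_opNorm w
    have h2 : rC w = reLin d w := rfl
    rwa [h2] at h
  set cC : EuclideanSpace ℝ (Fin d) →L[ℝ] (Fin d → ℂ) :=
    LinearMap.toContinuousLinearMap (complexify d) with hcCdef
  have hcC : ∀ v : EuclideanSpace ℝ (Fin d), cC v = complexify d v := fun _ => rfl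
  -- group-power facts
  have hnatpow : ∀ n : ℕ,
      ((up ^ (n : ℤ) : (Matrix (Fin d) (Fin d) ℝ)ˣ) : Matrix (Fin d) (Fin d) ℝ) = aplus ^ n := by
    intro n; rw [zpow_natCast, Units.val_pow_eq_pow_val, hup]
  have hnegpow : ∀ n : ℕ,
      ((um ^ (-(n : ℤ)) : (Matrix (Fin d) (Fin d) ℝ)ˣ) : Matrix (Fin d) (Fin d) ℝ) =
        ((um⁻¹ : (Matrix (Fin d) (Fin d) ℝ)ˣ) : Matrix (Fin d) (Fin d) ℝ) ^ n := by
    intro n; rw [zpow_neg, zpow_natCast, ← inv_pow, Units.val_pow_eq_pow_val]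
  have hstep_up : ∀ m : ℤ,
      aplus * ((up ^ m : (Matrix (Fin d) (Fin d) ℝ)ˣ) : Matrix (Fin d) (Fin d) ℝ) =
        ((up ^ (m+1) : (Matrix (Fin d) (Fin d) ℝ)ˣ) : Matrix (Fin d) (Fin d) ℝ) := by
    intro m
    rw [← hup, ← Units.val_mul]
    congr 1
    rw [add_comm]
    exact (zpow_one_add up m).symm
  have hstep_um : ∀ m : ℤ,
      aminus * ((um ^ m : (Matrix (Fin d) (Fin d) ℝ)ˣ) : Matrix (Fin d) (Fin d) ℝ) =
        ((um ^ (m+1) : (Matrix (Fin d) (Fin d) ℝ)ˣ) : Matrix (Fin d) (Fin d) ℝ) := by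
    intro m
    rw [← hum, ← Units.val_mul]
    congr 1
    rw [add_comm]
    exact (zpow_one_add um m).symm
  -- geometric decay of stable/unstable vectors (real level)
  have hdecayP : ∀ v ∈ stableSpace aplus, ∃ C ρ : ℝ, 0 ≤ C ∧ 0 ≤ ρ ∧ ρ < 1 ∧
      ∀ n : ℕ, ‖matOp (aplus ^ n) v‖ ≤ C * ρ ^ n := by
    intro v hv
    have hv' : complexify d v ∈ ⨆ μ ∈ {μ : ℂ | ‖μ‖ < 1}, (mHom d aplus).maxGenEigenspace μ :=
      mem_genSpace_iff.mp hv
    obtain ⟨C, ρ, hC, h0, h1, hb⟩ := geoDecay_of_mem_iSup hv'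
    refine ⟨‖rC‖ * C, ρ, mul_nonneg (norm_nonneg _) hC, h0, h1, fun n => ?_⟩
    have he : matOp (aplus ^ n) v = reLin d (complexify d (matOp (aplus ^ n) v)) :=
      (reLin_complexify _).symm
    rw [he, complexify_matOp_pow]
    calc ‖reLin d (((mHom d aplus) ^ n) (complexify d v))‖
        ≤ ‖rC‖ * ‖((mHom d aplus) ^ n) (complexify d v)‖ := hKr _
      _ ≤ ‖rC‖ * (C * ρ ^ n) := mul_le_mul_of_nonneg_left (hb n) (norm_nonneg _)
      _ = ‖rC‖ * C * ρ ^ n := by ring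
  have hdecayM : ∀ v ∈ unstableSpace aminus, ∃ C ρ : ℝ, 0 ≤ C ∧ 0 ≤ ρ ∧ ρ < 1 ∧
      ∀ n : ℕ, ‖matOp (((um⁻¹ : (Matrix (Fin d) (Fin d) ℝ)ˣ) : Matrix (Fin d) (Fin d) ℝ) ^ n) v‖
        ≤ C * ρ ^ n := by
    intro v hv
    have hv' : complexify d v ∈
        ⨆ μ ∈ {μ : ℂ | 1 < ‖μ‖}, (↑Tmu : Module.End ℂ (Fin d → ℂ)).maxGenEigenspace μ := by
      rw [hTmu]; exact mem_genSpace_iff.mp hv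
    have hv'' := unstable_le_stable_inv Tmu hv'
    rw [hTmuinv] at hv''
    obtain ⟨C, ρ, hC, h0, h1, hb⟩ := geoDecay_of_mem_iSup hv''
    refine ⟨‖rC‖ * C, ρ, mul_nonneg (norm_nonneg _) hC, h0, h1, fun n => ?_⟩
    set M : Matrix (Fin d) (Fin d) ℝ :=
      ((um⁻¹ : (Matrix (Fin d) (Fin d) ℝ)ˣ) : Matrix (Fin d) (Fin d) ℝ) with hM
    have he : matOp (M ^ n) v = reLin d (complexify d (matOp (M ^ n) v)) :=
      (reLin_complexify _).symm
    rw [he, complexify_matOp_pow]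
    calc ‖reLin d (((mHom d M) ^ n) (complexify d v))‖
        ≤ ‖rC‖ * ‖((mHom d M) ^ n) (complexify d v)‖ := hKr _
      _ ≤ ‖rC‖ * (C * ρ ^ n) := mul_le_mul_of_nonneg_left (hb n) (norm_nonneg _)
      _ = ‖rC‖ * C * ρ ^ n := by ring
  -- elements of ℓ² tend to zero
  have hexp : ∀ t : ℝ, t ^ (2 : ENNReal).toReal = t ^ (2 : ℕ) := by
    intro t
    rw [show ((2 : ENNReal).toReal) = ((2 : ℕ) : ℝ) by norm_num, Real.rpow_natCast]
  have hTT : ∀ x : L2 d, Tendsto (fun n : ℤ => x n) cofinite (𝓝 0) := by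
    intro x
    have hs := (lp.memℓp x).summable (by norm_num : 0 < (2 : ENNReal).toReal)
    have h2 := hs.tendsto_cofinite_zero
    rw [tendsto_zero_iff_norm_tendsto_zero]
    have h3 : Tendsto (fun n : ℤ => ‖x n‖ ^ (2 : ℕ)) cofinite (𝓝 0) := by
      have heq : (fun n : ℤ => ‖x n‖ ^ (2 : ENNReal).toReal) = fun n : ℤ => ‖x n‖ ^ (2 : ℕ) :=
        funext fun n => hexp _
      rwa [heq] at h2
    have h4 := (Real.continuous_sqrt.tendsto 0).comp h3
    simp only [Function.comp_def, Real.sqrt_zero] at h4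
    refine h4.congr fun n => ?_
    rw [Real.sqrt_sq (norm_nonneg _)]
  -- ## the set equality
  have hSet : (LinearMap.ker (L : L2 d →ₗ[ℝ] L2 d) : Set (L2 d)) =
      {x : L2 d | x 0 ∈ stableSpace aplus ⊓ unstableSpace aminus ∧
        (∀ n : ℤ, 0 ≤ n → x n = matOp ((up ^ n : (Matrix (Fin d) (Fin d) ℝ)ˣ) : Matrix (Fin d) (Fin d) ℝ) (x 0)) ∧
        (∀ n : ℤ, n ≤ 0 → x n = matOp ((um ^ n : (Matrix (Fin d) (Fin d) ℝ)ˣ) : Matrix (Fin d) (Fin d) ℝ) (x 0))} := by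
    apply Set.eq_of_subset_of_subset
    · -- forward inclusion
      intro x hx
      have hx0 : L x = 0 := hx
      have hrec : ∀ n : ℤ, x (n+1) = matOp (a n) (x n) := by
        intro n
        have h0 : (L x) n = 0 := by rw [hx0]; simp [lp.coeFn_zero]
        rw [hL x n] at h0
        exact (sub_eq_zero.mp h0)
      have hplusF : ∀ n : ℤ, 0 ≤ n →
          x n = matOp ((up ^ n : (Matrix (Fin d) (Fin d) ℝ)ˣ) : Matrix (Fin d) (Fin d) ℝ) (x 0) := by
        have hnat : ∀ m : ℕ,
            x ((m : ℕ) : ℤ) = matOp ((up ^ ((m : ℕ) : ℤ) : (Matrix (Fin d) (Fin d) ℝ)ˣ) : Matrix (Fin d) (Fin d) ℝ) (x 0) := by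
          intro m
          induction m with
          | zero =>
            rw [show (((0 : ℕ) : ℕ) : ℤ) = 0 by norm_num, zpow_zero, Units.val_one, matOp_one]
          | succ m ih =>
            have hc : (((m + 1 : ℕ) : ℕ) : ℤ) = ((m : ℕ) : ℤ) + 1 := by push_cast; ring
            rw [hc, hrec ((m : ℕ) : ℤ), ha, if_pos (Int.natCast_nonneg m), ih, ← matOp_mul,
              hstep_up]
        intro n hn
        obtain ⟨m, rfl⟩ := Int.eq_ofNat_of_zero_le hn
        exact hnat m
      have hminusF : ∀ n : ℤ, n ≤ 0 →
          x n = matOp ((um ^ n : (Matrix (Fin d) (Fin d) ℝ)ˣ) : Matrix (Fin d) (Fin d) ℝ) (x 0) := by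
        have hcancel : ∀ p : EuclideanSpace ℝ (Fin d),
            matOp ((um⁻¹ : (Matrix (Fin d) (Fin d) ℝ)ˣ) : Matrix (Fin d) (Fin d) ℝ)
              (matOp aminus p) = p := by
          intro p
          rw [← matOp_mul, ← hum, ← Units.val_mul, inv_mul_cancel, Units.val_one, matOp_one]
        have hnat : ∀ m : ℕ,
            x (-((m : ℕ) : ℤ)) = matOp ((um ^ (-((m : ℕ) : ℤ)) : (Matrix (Fin d) (Fin d) ℝ)ˣ) : Matrix (Fin d) (Fin d) ℝ) (x 0) := by
          intro m
          induction m with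
          | zero =>
            rw [show -(((0 : ℕ) : ℕ) : ℤ) = 0 by norm_num, zpow_zero, Units.val_one, matOp_one]
          | succ m ih =>
            set k : ℤ := -((m : ℕ) : ℤ) with hk
            have hc : -(((m + 1 : ℕ) : ℕ) : ℤ) = k - 1 := by rw [hk]; push_cast; ring
            have ha' : a (k - 1) = aminus := by rw [ha, if_neg (by omega)]
            have h1 : x k = matOp aminus (x (k - 1)) := by
              have h2 := hrec (k - 1)
              have he : k - 1 + 1 = k := by ring
              rw [he, ha'] at h2
              exact h2
            have h3 : matOp aminus
                (matOp ((um ^ (k - 1) : (Matrix (Fin d) (Fin d) ℝ)ˣ) : Matrix (Fin d) (Fin d) ℝ) (x 0))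
                = matOp ((um ^ k : (Matrix (Fin d) (Fin d) ℝ)ˣ) : Matrix (Fin d) (Fin d) ℝ) (x 0) := by
              rw [← matOp_mul, hstep_um]
              have he : k - 1 + 1 = k := by ring
              rw [he]
            have h6 : matOp aminus (x (k - 1)) = matOp aminus
                (matOp ((um ^ (k - 1) : (Matrix (Fin d) (Fin d) ℝ)ˣ) : Matrix (Fin d) (Fin d) ℝ) (x 0)) := by
              rw [← h1, ih, ← h3]
            have h7 := congrArg
              (matOp ((um⁻¹ : (Matrix (Fin d) (Fin d) ℝ)ˣ) : Matrix (Fin d) (Fin d) ℝ)) h6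
            rw [hcancel, hcancel] at h7
            rw [hc]
            exact h7
        intro n hn
        obtain ⟨m, hm⟩ := Int.eq_ofNat_of_zero_le (by omega : (0:ℤ) ≤ -n)
        have h8 := hnat m
        have h9 : -((m : ℕ) : ℤ) = n := by omega
        rw [h9] at h8
        exact h8
      refine ⟨⟨?_, ?_⟩, hplusF, hminusF⟩
      · -- x 0 ∈ stable space of aplus
        have htend : Tendsto
            (fun n : ℕ => ((↑Tpu : Module.End ℂ (Fin d → ℂ)) ^ n) (complexify d (x 0)))
            atTop (𝓝 0) := by
          have h1 : ∀ n : ℕ, ((↑Tpu : Module.End ℂ (Fin d → ℂ)) ^ n) (complexify d (x 0)) =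
              complexify d (x (n : ℤ)) := by
            intro n
            rw [hplusF (n : ℤ) (Int.natCast_nonneg n), hnatpow n, complexify_matOp_pow, hTpu]
          rw [funext h1]
          have h2 : Tendsto (fun n : ℤ => x n) atTop (𝓝 0) :=
            (hTT x).mono_left (by rw [Int.cofinite_eq]; exact le_sup_right)
          have h3 : Tendsto (fun n : ℕ => x ((n : ℕ) : ℤ)) atTop (𝓝 0) :=
            h2.comp tendsto_natCast_atTop_atTop
          have h4 := (cC.continuous.tendsto 0).comp h3
          simp only [Function.comp_def, map_zero] at h4
          refine h4.congr fun n => ?_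
          exact hcC _
        have hh := mem_stable_of_tendsto Tpu hypP htend
        rw [hTpu] at hh
        exact mem_genSpace_iff.mpr hh
      · -- x 0 ∈ unstable space of aminus
        have htend : Tendsto
            (fun n : ℕ => ((↑(Tmu⁻¹) : Module.End ℂ (Fin d → ℂ)) ^ n) (complexify d (x 0)))
            atTop (𝓝 0) := by
          have h1 : ∀ n : ℕ, ((↑(Tmu⁻¹) : Module.End ℂ (Fin d → ℂ)) ^ n) (complexify d (x 0)) =
              complexify d (x (-(n : ℤ))) := by
            intro n
            rw [hminusF (-(n : ℤ)) (by omega), hnegpow n, complexify_matOp_pow, hTmuinv]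
          rw [funext h1]
          have h2 : Tendsto (fun n : ℤ => x n) atBot (𝓝 0) :=
            (hTT x).mono_left (by rw [Int.cofinite_eq]; exact le_sup_left)
          have h3 : Tendsto (fun n : ℕ => x (-(n : ℤ))) atTop (𝓝 0) :=
            h2.comp (tendsto_neg_atTop_atBot.comp tendsto_natCast_atTop_atTop)
          have h4 := (cC.continuous.tendsto 0).comp h3
          simp only [Function.comp_def, map_zero] at h4
          refine h4.congr fun n => ?_
          exact hcC _
        have hh := mem_stable_of_tendsto (Tmu⁻¹) (hyp_inv Tmu hypM) htend
        have h6 := stable_inv_le_unstable Tmu hh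
        rw [hTmu] at h6
        exact mem_genSpace_iff.mpr h6
    · -- backward inclusion
      intro x hx
      obtain ⟨hx0, hplusF, hminusF⟩ := hx
      show x ∈ LinearMap.ker (L : L2 d →ₗ[ℝ] L2 d)
      rw [LinearMap.mem_ker]
      apply lp.ext
      funext n
      show (L x) n = (0 : L2 d) n
      rw [lp.coeFn_zero, Pi.zero_apply, hL x n]
      by_cases hn : 0 ≤ n
      · rw [hplusF (n+1) (by omega), hplusF n hn, ha n, if_pos hn, ← matOp_mul, hstep_up,
          sub_self]
      · rw [hminusF (n+1) (by omega), hminusF n (by omega), ha n, if_neg hn, ← matOp_mul,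
          hstep_um, sub_self]
  refine ⟨hSet, ?_⟩
  -- ## the dimension statement
  have hmemset : ∀ y : L2 d, y ∈ LinearMap.ker (L : L2 d →ₗ[ℝ] L2 d) →
      (y 0 ∈ stableSpace aplus ⊓ unstableSpace aminus ∧
        (∀ n : ℤ, 0 ≤ n → y n = matOp ((up ^ n : (Matrix (Fin d) (Fin d) ℝ)ˣ) : Matrix (Fin d) (Fin d) ℝ) (y 0)) ∧
        (∀ n : ℤ, n ≤ 0 → y n = matOp ((um ^ n : (Matrix (Fin d) (Fin d) ℝ)ˣ) : Matrix (Fin d) (Fin d) ℝ) (y 0))) := by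
    intro y hy
    have h1 : y ∈ (LinearMap.ker (L : L2 d →ₗ[ℝ] L2 d) : Set (L2 d)) := hy
    rw [hSet] at h1
    exact h1
  set ev : L2 d →ₗ[ℝ] EuclideanSpace ℝ (Fin d) :=
    { toFun := fun y => y 0
      map_add' := fun y z => by simp only [lp.coeFn_add, Pi.add_apply]
      map_smul' := fun t y => by simp only [lp.coeFn_smul, Pi.smul_apply, RingHom.id_apply] } with hevdef
  set φ : (LinearMap.ker (L : L2 d →ₗ[ℝ] L2 d)) →ₗ[ℝ] ↥(stableSpace aplus ⊓ unstableSpace aminus) :=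
    LinearMap.codRestrict _ (ev.comp (LinearMap.ker (L : L2 d →ₗ[ℝ] L2 d)).subtype)
      (fun y => (hmemset y.1 y.2).1) with hφdef
  have hφval : ∀ y : LinearMap.ker (L : L2 d →ₗ[ℝ] L2 d), (φ y : EuclideanSpace ℝ (Fin d)) = (y : L2 d) 0 :=
    fun y => rfl
  have hinj : Function.Injective φ := by
    rw [injective_iff_map_eq_zero]
    intro y hy0
    have hy0' : (y : L2 d) 0 = 0 := by
      have := congrArg (Subtype.val) hy0
      rwa [hφval] at this
    obtain ⟨-, hplusF, hminusF⟩ := hmemset y.1 y.2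
    apply Subtype.ext
    apply lp.ext
    funext n
    show (y : L2 d) n = _
    rw [show ((0 : LinearMap.ker (L : L2 d →ₗ[ℝ] L2 d)) : L2 d) = 0 from rfl, lp.coeFn_zero, Pi.zero_apply]
    by_cases hn : 0 ≤ n
    · rw [hplusF n hn, hy0', map_zero]
    · rw [hminusF n (by omega), hy0', map_zero]
  have hsurj : Function.Surjective φ := by
    rintro ⟨v, hv⟩
    obtain ⟨C₁, ρ₁, hC₁, h01, h11, hb1⟩ := hdecayP v hv.1
    obtain ⟨C₂, ρ₂, hC₂, h02, h12, hb2⟩ := hdecayM v hv.2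
    set y0 : ∀ _ : ℤ, EuclideanSpace ℝ (Fin d) := fun n =>
      if 0 ≤ n then matOp ((up ^ n : (Matrix (Fin d) (Fin d) ℝ)ˣ) : Matrix (Fin d) (Fin d) ℝ) v
      else matOp ((um ^ n : (Matrix (Fin d) (Fin d) ℝ)ˣ) : Matrix (Fin d) (Fin d) ℝ) v
      with hy0def
    have hy0if : ∀ n : ℤ, y0 n =
        if 0 ≤ n then matOp ((up ^ n : (Matrix (Fin d) (Fin d) ℝ)ˣ) : Matrix (Fin d) (Fin d) ℝ) v
        else matOp ((um ^ n : (Matrix (Fin d) (Fin d) ℝ)ˣ) : Matrix (Fin d) (Fin d) ℝ) v :=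
      fun n => rfl
    have hy00 : y0 0 = v := by
      rw [hy0if 0, if_pos le_rfl, zpow_zero, Units.val_one, matOp_one]
    have hy0pos : ∀ n : ℕ, y0 (n : ℤ) = matOp (aplus ^ n) v := by
      intro n
      rw [hy0if, if_pos (Int.natCast_nonneg n), hnatpow]
    have hy0neg : ∀ n : ℕ, y0 (-(n : ℤ)) =
        matOp (((um⁻¹ : (Matrix (Fin d) (Fin d) ℝ)ˣ) : Matrix (Fin d) (Fin d) ℝ) ^ n) v := by
      intro n
      match n with
      | 0 =>
        simp only [Nat.cast_zero, neg_zero, pow_zero, matOp_one]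
        exact hy00
      | (k+1) =>
        rw [hy0if, if_neg (by omega), hnegpow]
    have hmem2 : Memℓp y0 2 := by
      apply memℓp_gen
      have hsum2 : Summable (fun n : ℤ => ‖y0 n‖ ^ (2 : ℕ)) := by
        apply Summable.of_nat_of_neg
        · have hg : Summable (fun n : ℕ => C₁ ^ 2 * (ρ₁ ^ 2) ^ n) :=
            (summable_geometric_of_lt_one (by positivity)
              (by nlinarith)).mul_left _
          refine Summable.of_nonneg_of_le (fun n => by positivity) (fun n => ?_) hg
          rw [hy0pos n]
          calc ‖matOp (aplus ^ n) v‖ ^ 2 ≤ (C₁ * ρ₁ ^ n) ^ 2 :=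
                pow_le_pow_left₀ (norm_nonneg _) (hb1 n) 2
            _ = C₁ ^ 2 * (ρ₁ ^ 2) ^ n := by ring
        · have hg : Summable (fun n : ℕ => C₂ ^ 2 * (ρ₂ ^ 2) ^ n) :=
            (summable_geometric_of_lt_one (by positivity)
              (by nlinarith)).mul_left _
          refine Summable.of_nonneg_of_le (fun n => by positivity) (fun n => ?_) hg
          rw [hy0neg n]
          calc ‖matOp (((um⁻¹ : (Matrix (Fin d) (Fin d) ℝ)ˣ) : Matrix (Fin d) (Fin d) ℝ) ^ n) v‖ ^ 2
              ≤ (C₂ * ρ₂ ^ n) ^ 2 := pow_le_pow_left₀ (norm_nonneg _) (hb2 n) 2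
            _ = C₂ ^ 2 * (ρ₂ ^ 2) ^ n := by ring
      have heq : (fun n : ℤ => ‖y0 n‖ ^ (2 : ENNReal).toReal) = fun n : ℤ => ‖y0 n‖ ^ (2 : ℕ) :=
        funext fun n => hexp _
      rw [heq]
      exact hsum2
    set y : L2 d := ⟨y0, hmem2⟩ with hydef
    have hyfn : ∀ n : ℤ, y n = y0 n := fun n => rfl
    have hyx : y ∈ {x : L2 d | x 0 ∈ stableSpace aplus ⊓ unstableSpace aminus ∧
        (∀ n : ℤ, 0 ≤ n → x n = matOp ((up ^ n : (Matrix (Fin d) (Fin d) ℝ)ˣ) : Matrix (Fin d) (Fin d) ℝ) (x 0)) ∧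
        (∀ n : ℤ, n ≤ 0 → x n = matOp ((um ^ n : (Matrix (Fin d) (Fin d) ℝ)ˣ) : Matrix (Fin d) (Fin d) ℝ) (x 0))} := by
      refine ⟨?_, ?_, ?_⟩
      · show y 0 ∈ _
        rw [hyfn, hy00]; exact hv
      · intro n hn
        rw [hyfn, hyfn, hy00, hy0if n, if_pos hn]
      · intro n hn
        rcases eq_or_lt_of_le hn with h | h
        · rw [h, hyfn, zpow_zero, Units.val_one, matOp_one]
        · rw [hyfn, hyfn, hy00, hy0if n, if_neg (by omega)]
    have hker : y ∈ LinearMap.ker (L : L2 d →ₗ[ℝ] L2 d) := by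
      have h1 : y ∈ (LinearMap.ker (L : L2 d →ₗ[ℝ] L2 d) : Set (L2 d)) := by rw [hSet]; exact hyx
      exact h1
    refine ⟨⟨y, hker⟩, ?_⟩
    apply Subtype.ext
    rw [hφval]
    show y0 0 = v
    exact hy00
  exact (LinearEquiv.ofBijective φ ⟨hinj, hsurj⟩).symm.finrank_eq.symm

end MainSec
end
end

section
/- Under the hypotheses of the preceding setting (f_n C¹ with f_n(0)=0, derivatives Df_n equicontinuous uniformly in n on bounded sets, sup_n |Df_n(0)| < ∞), the substitution operator F: ℓ²(ℤ, ℝᵈ) → ℓ²(ℤ, ℝᵈ), F(x) = (f_n(x(n))), is Fréchet differentiable at every x, with derivative DF(x) given by the multiplication operator y ↦ (Df_n(x(n)) y(n)), and DF: ℓ² → L(ℓ²) is continuous in operator norm. -/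
open Filter Topology
open scoped ENNReal

noncomputable section

lemma l2_norm_le_aux {d : ℕ} (u v : L2 d) {C : ℝ} (hC : 0 ≤ C)
    (h : ∀ n, ‖u n‖ ≤ C * ‖v n‖) : ‖u‖ ≤ C * ‖v‖ := by
  have hp : (0:ℝ) < (2:ℝ≥0∞).toReal := by norm_num
  refine lp.norm_le_of_forall_sum_le hp (by positivity) (fun s => ?_)
  have h1 : ∑ i ∈ s, ‖u i‖ ^ (2:ℝ≥0∞).toReal ≤ ∑ i ∈ s, (C * ‖v i‖) ^ (2:ℝ≥0∞).toReal := by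
    refine Finset.sum_le_sum (fun i _ => ?_)
    exact Real.rpow_le_rpow (norm_nonneg _) (h i) hp.le
  refine h1.trans ?_
  have h2 : ∀ i, (C * ‖v i‖) ^ (2:ℝ≥0∞).toReal
      = C ^ (2:ℝ≥0∞).toReal * ‖v i‖ ^ (2:ℝ≥0∞).toReal := fun i =>
    Real.mul_rpow hC (norm_nonneg _)
  simp only [h2, ← Finset.mul_sum]
  rw [Real.mul_rpow hC (norm_nonneg _)]
  exact mul_le_mul_of_nonneg_left (lp.sum_rpow_le_norm_rpow hp v s)
    (Real.rpow_nonneg hC _)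

lemma mem_segment_norm_le {E : Type*} [NormedAddCommGroup E] [NormedSpace ℝ E]
    {a b z : E} (hz : z ∈ segment ℝ a b) {M : ℝ} (ha : ‖a‖ ≤ M) (hb : ‖b‖ ≤ M) :
    ‖z‖ ≤ M := by
  have := (convex_closedBall (0:E) M).segment_subset
    (by simpa [Metric.mem_closedBall, dist_zero_right] using ha)
    (by simpa [Metric.mem_closedBall, dist_zero_right] using hb) hz
  simpa [Metric.mem_closedBall, dist_zero_right] using this

lemma mem_segment_dist_le {E : Type*} [NormedAddCommGroup E] [NormedSpace ℝ E]
    {a b z : E} (hz : z ∈ segment ℝ a b) : ‖z - a‖ ≤ ‖b - a‖ := by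
  have := (convex_closedBall a ‖b - a‖).segment_subset
    (by simp [Metric.mem_closedBall])
    (by simp [Metric.mem_closedBall, dist_eq_norm]) hz
  simpa [Metric.mem_closedBall, dist_eq_norm] using this

/-- Under the standing hypotheses (`f_n` is `C¹`, `f_n(0) = 0`, derivatives
equicontinuous uniformly in `n` on bounded sets, `sup_n ‖Df_n(0)‖ < ∞`), the
substitution operator `F(x) = (f_n(x(n)))` on `ℓ²(ℤ, ℝᵈ)` is Fréchet differentiable at
every point, with derivative the multiplication operator `y ↦ (Df_n(x(n)) y(n))`, and
the derivative depends continuously (in operator norm) on `x`. -/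
theorem substitution_operator_C1 {d : ℕ}
    (f : ℤ → EuclideanSpace ℝ (Fin d) → EuclideanSpace ℝ (Fin d))
    (hC1 : ∀ n, ContDiff ℝ 1 (f n))
    (hzero : ∀ n, f n 0 = 0)
    (hequi : ∀ M > (0 : ℝ), ∀ ε > (0 : ℝ), ∃ δ > (0 : ℝ),
      ∀ y₁ y₂ : EuclideanSpace ℝ (Fin d), ‖y₁‖ ≤ M → ‖y₂‖ ≤ M → ‖y₁ - y₂‖ < δ →
        ∀ n, ‖fderiv ℝ (f n) y₁ - fderiv ℝ (f n) y₂‖ < ε)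
    (hbdd0 : ∃ C₀ : ℝ, ∀ n, ‖fderiv ℝ (f n) 0‖ ≤ C₀)
    (F : L2 d → L2 d) (hF : ∀ (x : L2 d) (n : ℤ), (F x) n = f n (x n))
    (T : L2 d → (L2 d →L[ℝ] L2 d))
    (hT : ∀ (x y : L2 d) (n : ℤ), (T x y) n = fderiv ℝ (f n) (x n) (y n)) :
    (∀ x : L2 d, HasFDerivAt F (T x) x) ∧ Continuous T := by
  have htwo : ((2:ℝ≥0∞) ≠ 0) := by norm_num
  constructor
  · intro x
    rw [hasFDerivAt_iff_isLittleO_nhds_zero, Asymptotics.isLittleO_iff]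
    intro c hc
    obtain ⟨δ, hδ, hδ'⟩ := hequi (‖x‖ + 1) (by positivity) c hc
    rw [Metric.eventually_nhds_iff]
    refine ⟨min δ 1, by positivity, fun h hh => ?_⟩
    rw [dist_zero_right] at hh
    have hh1 : ‖h‖ < δ := hh.trans_le (min_le_left _ _)
    have hh2 : ‖h‖ ≤ 1 := (hh.trans_le (min_le_right _ _)).le
    refine l2_norm_le_aux (F (x + h) - F x - T x h) h hc.le (fun n => ?_)
    have hcomp : (F (x + h) - F x - T x h) n
        = f n (x n + h n) - f n (x n) - fderiv ℝ (f n) (x n) (h n) := by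
      have := lp.coeFn_sub (F (x + h) - F x) (T x h)
      rw [show ((F (x + h) - F x - T x h) : ∀ m, EuclideanSpace ℝ (Fin d)) n
          = (F (x + h) - F x) n - (T x h) n from congrFun this n]
      rw [show ((F (x + h) - F x) : ∀ m, EuclideanSpace ℝ (Fin d)) n
          = (F (x + h)) n - (F x) n from congrFun (lp.coeFn_sub (F (x+h)) (F x)) n]
      rw [hF, hF, hT]
      congr 2
    rw [hcomp]
    set a := x n
    set b := x n + h n
    have hba : b - a = h n := by simp [a, b]
    have han : ‖a‖ ≤ ‖x‖ + 1 := le_trans (lp.norm_apply_le_norm htwo x n) (by linarith)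
    have hbn : ‖b‖ ≤ ‖x‖ + 1 := by
      have := lp.norm_apply_le_norm htwo h n
      calc ‖b‖ ≤ ‖a‖ + ‖h n‖ := norm_add_le _ _
        _ ≤ ‖x‖ + 1 := by
            have := lp.norm_apply_le_norm htwo x n
            linarith
    have key : ‖f n b - f n a - (fderiv ℝ (f n) a) (b - a)‖ ≤ c * ‖b - a‖ := by
      refine (convex_segment a b).norm_image_sub_le_of_norm_fderiv_le'
        (fun z _ => ((hC1 n).differentiable one_ne_zero).differentiableAt)
        (fun z hz => ?_) (left_mem_segment ℝ a b) (right_mem_segment ℝ a b)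
      refine (hδ' z a (mem_segment_norm_le hz han hbn) han ?_ n).le
      calc ‖z - a‖ ≤ ‖b - a‖ := mem_segment_dist_le hz
        _ = ‖h n‖ := by rw [hba]
        _ ≤ ‖h‖ := lp.norm_apply_le_norm htwo h n
        _ < δ := hh1
    rw [hba] at key
    exact key
  · rw [Metric.continuous_iff]
    intro x ε hε
    obtain ⟨δ, hδ, hδ'⟩ := hequi (‖x‖ + 1) (by positivity) (ε/2) (half_pos hε)
    refine ⟨min δ 1, by positivity, fun x' hx' => ?_⟩
    rw [dist_eq_norm] at hx' ⊢
    have hx1 : ‖x' - x‖ < δ := hx'.trans_le (min_le_left _ _)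
    have hx2 : ‖x' - x‖ ≤ 1 := (hx'.trans_le (min_le_right _ _)).le
    have : ‖T x' - T x‖ ≤ ε/2 := by
      refine ContinuousLinearMap.opNorm_le_bound _ (by positivity) (fun y => ?_)
      rw [ContinuousLinearMap.sub_apply]
      refine l2_norm_le_aux (T x' y - T x y) y (by positivity) (fun n => ?_)
      have hcomp : (T x' y - T x y) n
          = (fderiv ℝ (f n) (x' n) - fderiv ℝ (f n) (x n)) (y n) := by
        rw [show ((T x' y - T x y) : ∀ m, EuclideanSpace ℝ (Fin d)) n
            = (T x' y) n - (T x y) n from congrFun (lp.coeFn_sub (T x' y) (T x y)) n]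
        rw [hT, hT, ContinuousLinearMap.sub_apply]
      rw [hcomp]
      have hx'n : ‖x' n‖ ≤ ‖x‖ + 1 := by
        calc ‖x' n‖ ≤ ‖x'‖ := lp.norm_apply_le_norm htwo x' n
          _ ≤ ‖x‖ + ‖x' - x‖ := by
              have := norm_sub_norm_le x' x; linarith
          _ ≤ ‖x‖ + 1 := by linarith
      have hxn : ‖x n‖ ≤ ‖x‖ + 1 := le_trans (lp.norm_apply_le_norm htwo x n) (by linarith)
      have hd : ‖x' n - x n‖ < δ := by
        calc ‖x' n - x n‖ = ‖(x' - x) n‖ := by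
              rw [congrFun (lp.coeFn_sub x' x) n, Pi.sub_apply]
          _ ≤ ‖x' - x‖ := lp.norm_apply_le_norm htwo (x' - x) n
          _ < δ := hx1
      calc ‖(fderiv ℝ (f n) (x' n) - fderiv ℝ (f n) (x n)) (y n)‖
          ≤ ‖fderiv ℝ (f n) (x' n) - fderiv ℝ (f n) (x n)‖ * ‖y n‖ :=
            ContinuousLinearMap.le_opNorm _ _
        _ ≤ (ε/2) * ‖y n‖ := by
            exact mul_le_mul_of_nonneg_right (hδ' (x' n) (x n) hx'n hxn hd n).le
              (norm_nonneg _)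
    linarith
end
end

section
/- Let f_n: ℝᵈ → ℝᵈ be continuous with f_n(0) = 0, satisfying |f_n(y)| ≤ C|y| uniformly in n on bounded sets, and such that f_n → f₊ pointwise, uniformly on bounded sets, as n → +∞, with f₊ continuous. Then the substitution operator F: ℓ²(ℤ, ℝᵈ) → ℓ²(ℤ, ℝᵈ), F(x) = (f_n(x(n))), is weakly sequentially continuous: if x_k ⇀ x weakly in ℓ², then F(x_k) ⇀ F(x) weakly in ℓ². -/
open Filter Topology
open scoped ENNReal

noncomputable section

/-- A weakly convergent sequence in `ℓ²` is norm-bounded (Banach–Steinhaus). -/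
lemma weak_bounded {d : ℕ} (xk : ℕ → L2 d) (x : L2 d) (h : WeakTendsto xk x) :
    ∃ M : ℝ, ∀ k, ‖xk k‖ ≤ M := by
  have hb : ∀ z : L2 d, ∃ C, ∀ k, ‖(innerSL ℝ (xk k)) z‖ ≤ C := by
    intro z
    obtain ⟨C, hC⟩ := (h z).norm.bddAbove_range
    exact ⟨C, fun k => hC (Set.mem_range_self k)⟩
  obtain ⟨C', hC'⟩ := banach_steinhaus hb
  exact ⟨C', fun k => by simpa [innerSL_apply_norm] using hC' k⟩

/-- Coordinates of a weakly convergent sequence converge (strongly, since the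
coordinate spaces are finite dimensional). -/
lemma coord_tendsto {d : ℕ} (xk : ℕ → L2 d) (x : L2 d) (h : WeakTendsto xk x) (n : ℤ) :
    Tendsto (fun k => xk k n) atTop (nhds (x n)) := by
  have hw : ∀ v : EuclideanSpace ℝ (Fin d),
      Tendsto (fun k => (inner ℝ (xk k n) v : ℝ)) atTop (nhds (inner ℝ (x n) v)) := by
    intro v
    have := h (lp.single 2 n v)
    simpa [lp.inner_single_right] using this
  have hcoord : ∀ i : Fin d, Tendsto (fun k => xk k n i) atTop (nhds (x n i)) := by
    intro i
    have := hw (EuclideanSpace.single i (1 : ℝ))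
    simpa [EuclideanSpace.inner_single_right] using this
  have hPi : Tendsto (fun k => (fun i => xk k n i : Fin d → ℝ)) atTop
      (nhds (fun i => x n i)) := tendsto_pi_nhds.mpr hcoord
  have hcont : Continuous ((PiLp.continuousLinearEquiv 2 ℝ (fun _ : Fin d => ℝ)).symm :
      (Fin d → ℝ) → EuclideanSpace ℝ (Fin d)) :=
    (PiLp.continuousLinearEquiv 2 ℝ (fun _ : Fin d => ℝ)).symm.continuous
  exact (hcont.tendsto _).comp hPi

/-- A norm-bounded sequence converging coordinatewise converges weakly. -/
lemma tendsto_weak_of_bounded {d : ℕ} (yk : ℕ → L2 d) (y : L2 d) (M : ℝ)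
    (hb : ∀ k, ‖yk k‖ ≤ M)
    (hpt : ∀ n : ℤ, Tendsto (fun k => yk k n) atTop (nhds (y n))) :
    WeakTendsto yk y := by
  intro z
  have key : Tendsto (fun k => (inner ℝ (yk k - y) z : ℝ)) atTop (nhds 0) := by
    rw [NormedAddCommGroup.tendsto_nhds_zero]
    intro ε hε
    have hM0 : (0 : ℝ) ≤ M := (norm_nonneg (yk 0)).trans (hb 0)
    set K : ℝ := M + ‖y‖ + 1 with hKdef
    have hK0 : 0 < K := by positivity
    set δ : ℝ := ε / 2 / K with hδdef
    have hδ : 0 < δ := by positivity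
    -- choose a finitely supported approximation of z
    have hs : HasSum (fun n : ℤ => lp.single 2 n (z n)) z :=
      lp.hasSum_single ENNReal.ofNat_ne_top z
    obtain ⟨S, hS⟩ := (Metric.tendsto_nhds.mp hs δ hδ).exists
    set w : L2 d := ∑ n ∈ S, lp.single 2 n (z n) with hwdef
    have hzw : ‖z - w‖ < δ := by
      rw [norm_sub_rev]
      simpa [dist_eq_norm] using hS
    -- the pairing with the finitely supported part tends to zero
    have hsum : ∀ k, (inner ℝ (yk k - y) w : ℝ)
        = ∑ n ∈ S, (inner ℝ (yk k n - y n) (z n) : ℝ) := by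
      intro k
      rw [hwdef, inner_sum]
      refine Finset.sum_congr rfl fun n _ => ?_
      rw [lp.inner_single_right]
      simp [lp.coeFn_sub]
    have h1 : Tendsto (fun k => (inner ℝ (yk k - y) w : ℝ)) atTop (nhds 0) := by
      have h1' : Tendsto (fun k => ∑ n ∈ S, (inner ℝ (yk k n - y n) (z n) : ℝ)) atTop
          (nhds (∑ n ∈ S, (inner ℝ ((y n : EuclideanSpace ℝ (Fin d)) - y n) (z n) : ℝ))) := by
        refine tendsto_finset_sum S fun n _ => ?_
        exact Filter.Tendsto.inner ((hpt n).sub tendsto_const_nhds) tendsto_const_nhds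
      simp only [sub_self, inner_zero_left, Finset.sum_const_zero] at h1'
      simpa [hsum] using h1'
    have h1ev : ∀ᶠ k in atTop, ‖(inner ℝ (yk k - y) w : ℝ)‖ < ε / 2 :=
      (NormedAddCommGroup.tendsto_nhds_zero.mp h1) (ε / 2) (half_pos hε)
    filter_upwards [h1ev] with k hk
    have hsplit : (inner ℝ (yk k - y) z : ℝ)
        = inner ℝ (yk k - y) w + inner ℝ (yk k - y) (z - w) := by
      rw [← inner_add_right]
      congr 1
      abel
    have hbound2 : ‖(inner ℝ (yk k - y) (z - w) : ℝ)‖ < ε / 2 := by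
      have h2 : ‖(inner ℝ (yk k - y) (z - w) : ℝ)‖ ≤ ‖yk k - y‖ * ‖z - w‖ :=
        norm_inner_le_norm _ _
      have h3 : ‖yk k - y‖ ≤ K := by
        calc ‖yk k - y‖ ≤ ‖yk k‖ + ‖y‖ := norm_sub_le _ _
          _ ≤ M + ‖y‖ + 1 := by linarith [hb k]
      have h4 : ‖yk k - y‖ * ‖z - w‖ ≤ K * ‖z - w‖ :=
        mul_le_mul_of_nonneg_right h3 (norm_nonneg _)
      have h5 : K * ‖z - w‖ < K * δ := by
        exact mul_lt_mul_of_pos_left hzw hK0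
      have h6 : K * δ = ε / 2 := by
        rw [hδdef]; field_simp
      exact lt_of_le_of_lt (h2.trans h4) (h6 ▸ h5)
    calc ‖(inner ℝ (yk k - y) z : ℝ)‖
        ≤ ‖(inner ℝ (yk k - y) w : ℝ)‖ + ‖(inner ℝ (yk k - y) (z - w) : ℝ)‖ := by
          rw [hsplit]; exact norm_add_le _ _
      _ < ε / 2 + ε / 2 := add_lt_add hk hbound2
      _ = ε := add_halves ε
  have heq : (fun k => (inner ℝ (yk k) z : ℝ))
      = fun k => (inner ℝ (yk k - y) z : ℝ) + (inner ℝ y z : ℝ) := by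
    funext k
    rw [inner_sub_left]
    ring
  rw [heq]
  simpa using key.add_const (inner ℝ y z : ℝ)

/-- If the `f_n` are continuous with `f_n(0) = 0`, satisfy a uniform linear bound on
bounded sets, and converge to a continuous map `f₊` uniformly on bounded sets as
`n → +∞`, then the substitution operator `F(x) = (f_n(x(n)))` on `ℓ²(ℤ, ℝᵈ)` is weakly
sequentially continuous. -/
theorem substitution_operator_weakly_continuous {d : ℕ}
    (f : ℤ → EuclideanSpace ℝ (Fin d) → EuclideanSpace ℝ (Fin d))
    (hcont : ∀ n, Continuous (f n))
    (hzero : ∀ n, f n 0 = 0)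
    (hlin : ∀ M > (0 : ℝ), ∃ C : ℝ, ∀ (n : ℤ) (y : EuclideanSpace ℝ (Fin d)),
      ‖y‖ ≤ M → ‖f n y‖ ≤ C * ‖y‖)
    (fplus : EuclideanSpace ℝ (Fin d) → EuclideanSpace ℝ (Fin d))
    (hfplus_cont : Continuous fplus)
    (hconv : ∀ M > (0 : ℝ), ∀ ε > (0 : ℝ), ∃ N : ℤ, ∀ n ≥ N,
      ∀ y : EuclideanSpace ℝ (Fin d), ‖y‖ ≤ M → ‖f n y - fplus y‖ < ε)
    (F : L2 d → L2 d) (hF : ∀ (x : L2 d) (n : ℤ), (F x) n = f n (x n)) :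
    ∀ (x : L2 d) (xk : ℕ → L2 d),
      WeakTendsto xk x → WeakTendsto (fun k => F (xk k)) (F x) := by
  intro x xk hxk
  obtain ⟨M0, hM0⟩ := weak_bounded xk x hxk
  set M : ℝ := max (max M0 ‖x‖) 1 with hMdef
  have hM1 : (1 : ℝ) ≤ M := le_max_right _ _
  have hMpos : (0 : ℝ) < M := lt_of_lt_of_le one_pos hM1
  obtain ⟨C0, hC0⟩ := hlin M hMpos
  set C : ℝ := max C0 0 with hCdef
  have hCnn : (0 : ℝ) ≤ C := le_max_right _ _
  have hC : ∀ (n : ℤ) (y : EuclideanSpace ℝ (Fin d)), ‖y‖ ≤ M → ‖f n y‖ ≤ C * ‖y‖ :=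
    fun n y hy => (hC0 n y hy).trans
      (mul_le_mul_of_nonneg_right (le_max_left _ _) (norm_nonneg _))
  -- the substitution operator maps the ball of radius M into the ball of radius C*M
  have hFb : ∀ w : L2 d, ‖w‖ ≤ M → ‖F w‖ ≤ C * M := by
    intro w hw
    have h2 : (0 : ℝ) < (2 : ℝ≥0∞).toReal := by norm_num
    refine lp.norm_le_of_forall_sum_le h2 (by positivity) fun s => ?_
    have step1 : ∑ n ∈ s, ‖(F w) n‖ ^ (2 : ℝ≥0∞).toReal
        ≤ ∑ n ∈ s, C ^ (2 : ℝ≥0∞).toReal * ‖w n‖ ^ (2 : ℝ≥0∞).toReal := by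
      refine Finset.sum_le_sum fun n _ => ?_
      have hwn : ‖w n‖ ≤ M := (lp.norm_apply_le_norm two_ne_zero w n).trans hw
      have hbnd : ‖(F w) n‖ ≤ C * ‖w n‖ := by rw [hF]; exact hC n (w n) hwn
      calc ‖(F w) n‖ ^ (2 : ℝ≥0∞).toReal
          ≤ (C * ‖w n‖) ^ (2 : ℝ≥0∞).toReal :=
            Real.rpow_le_rpow (norm_nonneg _) hbnd h2.le
        _ = C ^ (2 : ℝ≥0∞).toReal * ‖w n‖ ^ (2 : ℝ≥0∞).toReal :=
            Real.mul_rpow hCnn (norm_nonneg _)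
    have step2 : ∑ n ∈ s, ‖w n‖ ^ (2 : ℝ≥0∞).toReal ≤ ‖w‖ ^ (2 : ℝ≥0∞).toReal :=
      lp.sum_rpow_le_norm_rpow h2 w s
    calc ∑ n ∈ s, ‖(F w) n‖ ^ (2 : ℝ≥0∞).toReal
        ≤ C ^ (2 : ℝ≥0∞).toReal * ∑ n ∈ s, ‖w n‖ ^ (2 : ℝ≥0∞).toReal := by
          rw [← Finset.mul_sum] at step1; exact step1
      _ ≤ C ^ (2 : ℝ≥0∞).toReal * ‖w‖ ^ (2 : ℝ≥0∞).toReal := by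
          exact mul_le_mul_of_nonneg_left step2 (Real.rpow_nonneg hCnn _)
      _ = (C * ‖w‖) ^ (2 : ℝ≥0∞).toReal := (Real.mul_rpow hCnn (norm_nonneg _)).symm
      _ ≤ (C * M) ^ (2 : ℝ≥0∞).toReal := by
          refine Real.rpow_le_rpow (by positivity) ?_ h2.le
          exact mul_le_mul_of_nonneg_left hw hCnn
  have hxkM : ∀ k, ‖xk k‖ ≤ M :=
    fun k => (hM0 k).trans ((le_max_left M0 ‖x‖).trans (le_max_left _ _))
  have hpt : ∀ n : ℤ, Tendsto (fun k => (F (xk k)) n) atTop (nhds ((F x) n)) := by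
    intro n
    have h1 := coord_tendsto xk x hxk n
    have h2 := ((hcont n).tendsto (x n)).comp h1
    simpa only [Function.comp_def, hF] using h2
  exact tendsto_weak_of_bounded _ _ (C * M) (fun k => hFb _ (hxkM k)) hpt
end
end
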